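/- arXiv:0910.1879 — 5 statements merged into one kernel-verified Lean document; each statement's English description precedes it below -/
import Mathlib

section
/- If {w_a} is an orthonormal basis (with respect to the Hilbert–Schmidt inner product) of the Hermitian n×n matrices satisfying max_a ‖w_a‖² ≤ ν/n, and T is the tangent space at a rank-r Hermitian matrix ρ (matrices σ with (𝟙−P_U)σ(𝟙−P_U) = 0, where P_U projects onto the range of ρ), then max_a ‖𝒫_T w_a‖₂² ≤ 2νr/n, where 𝒫_T is the orthogonal projection onto T and ‖·‖₂ is the Frobenius norm. -/
open Matrix

noncomputable def opNorm {m : Type*} [Fintype m] [DecidableEq m] (A : Matrix m m ℂ) : ℝ :=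
  ‖Matrix.toEuclideanCLM (𝕜 := ℂ) (n := m) A‖

noncomputable def frobNorm {m : Type*} [Fintype m] (A : Matrix m m ℂ) : ℝ :=
  Real.sqrt (∑ i, ∑ j, ‖A i j‖ ^ 2)

/-- The orthogonal projection onto the range of a Hermitian matrix. -/
noncomputable def rangeProj {m : Type*} [Fintype m] [DecidableEq m] (A : Matrix m m ℂ) :
    Matrix m m ℂ :=
  if hA : A.IsHermitian then
    (hA.eigenvectorUnitary : Matrix m m ℂ) *
      Matrix.diagonal (fun i => if hA.eigenvalues i = 0 then (0 : ℂ) else 1) *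
      star (hA.eigenvectorUnitary : Matrix m m ℂ)
  else 0

/-- The orthogonal projection onto the tangent space `T` at `ρ`:
`𝒫_T σ = P_U σ + σ P_U − P_U σ P_U` with `P_U` the projection onto the range of `ρ`. -/
noncomputable def projT {m : Type*} [Fintype m] [DecidableEq m] (ρ σ : Matrix m m ℂ) :
    Matrix m m ℂ :=
  rangeProj ρ * σ + σ * rangeProj ρ - rangeProj ρ * σ * rangeProj ρ

noncomputable def sqnorm {m : Type*} [Fintype m] (x : m → ℂ) : ℝ :=
  ∑ j, ‖x j‖ ^ 2

lemma sqnorm_nonneg {m : Type*} [Fintype m] (x : m → ℂ) : 0 ≤ sqnorm x := by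
  unfold sqnorm; positivity

lemma sqnorm_eq_dot {m : Type*} [Fintype m] (x : m → ℂ) :
    ((sqnorm x : ℝ) : ℂ) = star x ⬝ᵥ x := by
  unfold sqnorm
  rw [dotProduct]
  push_cast
  refine Finset.sum_congr rfl fun j _ => ?_
  rw [Pi.star_apply, RCLike.star_def, ← Complex.normSq_eq_conj_mul_self, ← Complex.sq_norm, Complex.ofReal_pow]


lemma sqnorm_mulVec_unitary {m : Type*} [Fintype m] [DecidableEq m] (M : Matrix m m ℂ)
    (hM : Mᴴ * M = 1) (x : m → ℂ) : sqnorm (M *ᵥ x) = sqnorm x := by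
  have h : ((sqnorm (M *ᵥ x) : ℝ) : ℂ) = ((sqnorm x : ℝ) : ℂ) := by
    rw [sqnorm_eq_dot, sqnorm_eq_dot, star_mulVec, ← dotProduct_mulVec, mulVec_mulVec, hM,
      one_mulVec]
  exact_mod_cast h

lemma sqnorm_mulVec_le {m : Type*} [Fintype m] [DecidableEq m] (A : Matrix m m ℂ) (x : m → ℂ) :
    sqnorm (A *ᵥ x) ≤ opNorm A ^ 2 * sqnorm x := by
  have h := (Matrix.toEuclideanCLM (𝕜 := ℂ) (n := m) A).le_opNorm ((WithLp.equiv 2 _).symm x)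
  have hn : ∀ y : m → ℂ, ‖(WithLp.equiv 2 (m → ℂ)).symm y‖ = Real.sqrt (sqnorm y) := by
    intro y
    rw [EuclideanSpace.norm_eq]
    congr 1
  have hA : Matrix.toEuclideanCLM (𝕜 := ℂ) (n := m) A ((WithLp.equiv 2 _).symm x)
      = (WithLp.equiv 2 _).symm (A *ᵥ x) := by
    rfl
  rw [hA, hn, hn] at h
  have h2 := pow_le_pow_left₀ (Real.sqrt_nonneg _) h 2
  rw [Real.sq_sqrt (sqnorm_nonneg _), mul_pow, Real.sq_sqrt (sqnorm_nonneg _)] at h2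
  exact h2

lemma frobNorm_sq {m : Type*} [Fintype m] (A : Matrix m m ℂ) :
    frobNorm A ^ 2 = ∑ i, ∑ j, ‖A i j‖ ^ 2 :=
  Real.sq_sqrt (by positivity)

lemma sum_abs_sq_eq_trace {m : Type*} [Fintype m] (A : Matrix m m ℂ) :
    ((∑ i, ∑ j, ‖A i j‖ ^ 2 : ℝ) : ℂ) = Matrix.trace (Aᴴ * A) := by
  rw [Matrix.trace, Finset.sum_comm]
  push_cast
  refine Finset.sum_congr rfl fun i _ => ?_
  rw [Matrix.diag_apply, Matrix.mul_apply]
  refine Finset.sum_congr rfl fun j _ => ?_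
  rw [Matrix.conjTranspose_apply, RCLike.star_def, ← Complex.normSq_eq_conj_mul_self,
    ← Complex.sq_norm, Complex.ofReal_pow]

lemma frob_conj {m : Type*} [Fintype m] [DecidableEq m] (U M : Matrix m m ℂ)
    (h1 : Uᴴ * U = 1) : frobNorm (U * M * Uᴴ) = frobNorm M := by
  unfold frobNorm
  congr 1
  have h : ((∑ i, ∑ j, ‖(U * M * Uᴴ) i j‖ ^ 2 : ℝ) : ℂ)
      = ((∑ i, ∑ j, ‖M i j‖ ^ 2 : ℝ) : ℂ) := by
    rw [sum_abs_sq_eq_trace, sum_abs_sq_eq_trace]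
    rw [show (U * M * Uᴴ)ᴴ = U * Mᴴ * Uᴴ by
      simp [Matrix.conjTranspose_mul, Matrix.mul_assoc]]
    rw [show U * Mᴴ * Uᴴ * (U * M * Uᴴ) = U * (Mᴴ * M) * Uᴴ by
      simp only [Matrix.mul_assoc]
      rw [← Matrix.mul_assoc Uᴴ U, h1, Matrix.one_mul]]
    rw [Matrix.trace_mul_cycle, ← Matrix.mul_assoc, h1, Matrix.one_mul]
  exact_mod_cast h

/-- If `{w_a}` is an orthonormal (Hilbert–Schmidt) basis of the Hermitian `n×n` matrices
with `max_a ‖w_a‖² ≤ ν/n` and `ρ` is Hermitian of rank `r`, then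
`max_a ‖𝒫_T w_a‖₂² ≤ 2νr/n`. -/
theorem fourier_type_incoherence {n : ℕ} (hn : 0 < n)
    (w : Fin (n ^ 2) → Matrix (Fin n) (Fin n) ℂ)
    (hherm : ∀ a, (w a).IsHermitian)
    (horth : ∀ a b, Matrix.trace (w a * w b) = if a = b then 1 else 0)
    (hspan : ∀ σ : Matrix (Fin n) (Fin n) ℂ, σ.IsHermitian →
      σ = ∑ a, ((Matrix.trace (w a * σ)).re : ℝ) • w a)
    (ν : ℝ) (hν : ∀ a, opNorm (w a) ^ 2 ≤ ν / n)
    (ρ : Matrix (Fin n) (Fin n) ℂ) (hρ : ρ.IsHermitian) (r : ℕ) (hrank : ρ.rank = r) :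
    ∀ a, frobNorm (projT ρ (w a)) ^ 2 ≤ 2 * ν * r / n := by
  intro a
  classical
  set W := w a with hWdef
  have hW : W.IsHermitian := hherm a
  set U : Matrix (Fin n) (Fin n) ℂ := (hρ.eigenvectorUnitary : Matrix (Fin n) (Fin n) ℂ)
    with hUdef
  have hU1 : Uᴴ * U = 1 := by
    simpa [Matrix.star_eq_conjTranspose] using
      Matrix.UnitaryGroup.star_mul_self hρ.eigenvectorUnitary
  have hU2 : U * Uᴴ = 1 := by
    have := mul_eq_one_comm.mp hU1
    exact this
  set d : Fin n → ℂ := fun i => if hρ.eigenvalues i = 0 then (0 : ℂ) else 1 with hddef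
  set D : Matrix (Fin n) (Fin n) ℂ := Matrix.diagonal d with hDdef
  have hP : rangeProj ρ = U * D * Uᴴ := by
    rw [rangeProj, dif_pos hρ, Matrix.star_eq_conjTranspose]
  set V : Matrix (Fin n) (Fin n) ℂ := Uᴴ * W * U with hVdef
  have hV : V.IsHermitian := by
    unfold Matrix.IsHermitian
    simp [hVdef, Matrix.conjTranspose_mul, Matrix.mul_assoc, hW.eq]
  set M : Matrix (Fin n) (Fin n) ℂ := D * V + V * D - D * V * D with hMdef
  have key : projT ρ W = U * M * Uᴴ := by
    rw [projT, hP, hMdef, hVdef]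
    simp only [Matrix.mul_add, Matrix.add_mul, Matrix.mul_sub, Matrix.sub_mul, Matrix.mul_assoc,
      hU2, Matrix.mul_one]
    rw [← Matrix.mul_assoc U Uᴴ (W * (U * (D * Uᴴ))), hU2, Matrix.one_mul]
  have hfrob : frobNorm (projT ρ W) = frobNorm M := by rw [key, frob_conj U M hU1]
  -- real indicator
  set e : Fin n → ℝ := fun i => if hρ.eigenvalues i = 0 then (0 : ℝ) else 1 with hedef
  have hentry : ∀ i j, ‖M i j‖ ^ 2 ≤ (e i + e j) * ‖V i j‖ ^ 2 := by
    intro i j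
    have hM : M i j = (d i + d j - d i * d j) * V i j := by
      simp [hMdef, hDdef, Matrix.diagonal_mul, Matrix.mul_diagonal, Matrix.sub_apply,
        Matrix.add_apply]
      ring
    rw [hM]
    by_cases hi : hρ.eigenvalues i = 0 <;> by_cases hj : hρ.eigenvalues j = 0 <;>
      simp [hddef, hedef, hi, hj] <;> nlinarith [sq_nonneg (‖V i j‖)]
  -- column sums
  have hνn : 0 ≤ ν / n := le_trans (sq_nonneg _) (hν a)
  have hcol : ∀ i, (∑ k, ‖V k i‖ ^ 2) ≤ ν / n := by
    intro i
    have h1 : (fun k => V k i) = V *ᵥ Pi.single i 1 := by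
      funext k; simp [Matrix.mulVec_single]
    have h2 : sqnorm (V *ᵥ Pi.single i 1) ≤ opNorm W ^ 2 * sqnorm (Pi.single i (1 : ℂ)) := by
      rw [hVdef, ← Matrix.mulVec_mulVec, ← Matrix.mulVec_mulVec]
      rw [sqnorm_mulVec_unitary Uᴴ (by rw [Matrix.conjTranspose_conjTranspose]; exact hU2) _]
      calc sqnorm (W *ᵥ (U *ᵥ Pi.single i 1)) ≤ opNorm W ^ 2 * sqnorm (U *ᵥ Pi.single i 1) :=
            sqnorm_mulVec_le W _
        _ = opNorm W ^ 2 * sqnorm (Pi.single i (1 : ℂ)) := by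
            rw [sqnorm_mulVec_unitary U hU1]
    have h3 : sqnorm (Pi.single i (1 : ℂ)) = 1 := by
      simp [sqnorm, Pi.single_apply, apply_ite]
    have : (∑ k, ‖V k i‖ ^ 2) = sqnorm (V *ᵥ Pi.single i 1) := by
      rw [← h1]; rfl
    rw [this]
    calc sqnorm (V *ᵥ Pi.single i 1) ≤ opNorm W ^ 2 * 1 := by rw [← h3]; exact h2
      _ = opNorm W ^ 2 := mul_one _
      _ ≤ ν / n := hν a
  have hrow : ∀ i, (∑ k, ‖V i k‖ ^ 2) = (∑ k, ‖V k i‖ ^ 2) := by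
    intro i
    refine Finset.sum_congr rfl fun k _ => ?_
    have hik : V i k = star (V k i) := by
      conv_lhs => rw [← hV.eq]
      exact Matrix.conjTranspose_apply V k i
    rw [hik, RCLike.star_def, Complex.norm_conj]
  have he_nonneg : ∀ i, 0 ≤ e i := by
    intro i; rw [hedef]; positivity
  have hsum_e : ∑ i, e i = (r : ℝ) := by
    have h1 : ∑ i, e i = (((Finset.univ : Finset (Fin n)).filter
        fun i => hρ.eigenvalues i ≠ 0).card : ℝ) := by
      rw [← Finset.sum_boole]
      refine Finset.sum_congr rfl fun i _ => ?_
      by_cases h : hρ.eigenvalues i = 0 <;> simp [hedef, h]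
    rw [h1, ← Fintype.card_subtype, ← hρ.rank_eq_card_non_zero_eigs, hrank]
  rw [hfrob, frobNorm_sq]
  have step1 : ∑ i, ∑ j, ‖M i j‖ ^ 2
      ≤ ∑ i, ∑ j, (e i + e j) * ‖V i j‖ ^ 2 :=
    Finset.sum_le_sum fun i _ => Finset.sum_le_sum fun j _ => hentry i j
  have step2 : ∑ i, ∑ j, (e i + e j) * ‖V i j‖ ^ 2
      = (∑ i, e i * ∑ k, ‖V i k‖ ^ 2)
        + ∑ i, e i * ∑ k, ‖V k i‖ ^ 2 := by
    have h1 : ∀ i, ∑ j, (e i + e j) * ‖V i j‖ ^ 2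
        = (∑ j, e i * ‖V i j‖ ^ 2) + ∑ j, e j * ‖V i j‖ ^ 2 := by
      intro i
      rw [← Finset.sum_add_distrib]
      exact Finset.sum_congr rfl fun j _ => add_mul _ _ _
    calc ∑ i, ∑ j, (e i + e j) * ‖V i j‖ ^ 2
        = (∑ i, ∑ j, e i * ‖V i j‖ ^ 2)
          + ∑ i, ∑ j, e j * ‖V i j‖ ^ 2 := by
          rw [← Finset.sum_add_distrib]
          exact Finset.sum_congr rfl fun i _ => h1 i
      _ = (∑ i, e i * ∑ k, ‖V i k‖ ^ 2)
          + ∑ i, e i * ∑ k, ‖V k i‖ ^ 2 := by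
          congr 1
          · exact Finset.sum_congr rfl fun i _ => (Finset.mul_sum _ _ _).symm
          · rw [Finset.sum_comm]
            exact Finset.sum_congr rfl fun j _ => (Finset.mul_sum _ _ _).symm
  have step3 : (∑ i, e i * ∑ k, ‖V i k‖ ^ 2)
        + ∑ i, e i * ∑ k, ‖V k i‖ ^ 2
      ≤ (∑ i, e i * (ν / n)) + ∑ i, e i * (ν / n) := by
    refine add_le_add (Finset.sum_le_sum fun i _ => ?_) (Finset.sum_le_sum fun i _ => ?_)
    · rw [hrow i]; exact mul_le_mul_of_nonneg_left (hcol i) (he_nonneg i)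
    · exact mul_le_mul_of_nonneg_left (hcol i) (he_nonneg i)
  have step4 : (∑ i, e i * (ν / n)) + ∑ i, e i * (ν / n) = 2 * ν * r / n := by
    rw [← Finset.sum_mul, hsum_e]
    ring
  linarith [step1, step2.le, step3, step4.le]
end

section
/- Exact recovery via dual certificate: Let ρ be Hermitian with tangent space T and ℛ a self-adjoint linear map on Hermitian matrices. Suppose Δ ≠ 0 is Hermitian with ℛΔ = 0 and ‖Δ_T‖₂ < n²‖Δ_T⊥‖₂ (where Δ_T = 𝒫_T Δ, Δ_T⊥ = Δ − Δ_T), and suppose there exists Y in the range of ℛ with ‖𝒫_T Y − sign ρ‖₂ ≤ 1/(2n²) and ‖𝒫_T⊥ Y‖ ≤ 1/2. Then ‖ρ + Δ‖₁ > ‖ρ‖₁. -/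
open Matrix
open scoped ComplexOrder

noncomputable def traceNorm {m : Type*} [Fintype m] [DecidableEq m] (A : Matrix m m ℂ) : ℝ :=
  ∑ i, Real.sqrt ((Matrix.posSemidef_conjTranspose_mul_self A).1.eigenvalues i)

/-- `sign` of a Hermitian matrix, via the functional calculus (junk value `0` otherwise). -/
noncomputable def matSign {m : Type*} [Fintype m] [DecidableEq m] (A : Matrix m m ℂ) :
    Matrix m m ℂ :=
  if hA : A.IsHermitian then
    (hA.eigenvectorUnitary : Matrix m m ℂ) *
      Matrix.diagonal (fun i => (Real.sign (hA.eigenvalues i) : ℂ)) *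
      star (hA.eigenvectorUnitary : Matrix m m ℂ)
  else 0

namespace DC
variable {m : Type*} [Fintype m] [DecidableEq m]

/-- conjugation by a coisometry multiplies diagonals -/
lemma UDU_mul (V : Matrix m m ℂ) (hV : star V * V = 1) (d e : m → ℂ) :
    (V * diagonal d * star V) * (V * diagonal e * star V)
      = V * diagonal (fun i => d i * e i) * star V := by
  have : diagonal d * (star V * V) * diagonal e = diagonal (fun i => d i * e i) := by
    rw [hV, mul_one, diagonal_mul_diagonal]
  calc (V * diagonal d * star V) * (V * diagonal e * star V)
      = V * (diagonal d * (star V * V) * diagonal e) * star V := by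
        simp only [Matrix.mul_assoc]
    _ = V * diagonal (fun i => d i * e i) * star V := by rw [this]

lemma trace_UDU (V : Matrix m m ℂ) (hV : star V * V = 1) (d : m → ℂ) :
    (V * diagonal d * star V).trace = ∑ i, d i := by
  rw [trace_mul_comm, ← mul_assoc, hV, one_mul, trace_diagonal]

lemma UDU_herm (V : Matrix m m ℂ) (d : m → ℝ) :
    (V * diagonal (fun i => (d i : ℂ)) * star V).IsHermitian := by
  have h : (star fun i => (d i : ℂ)) = fun i => (d i : ℂ) := by
    funext i; simp
  unfold Matrix.IsHermitian
  rw [star_eq_conjTranspose, conjTranspose_mul, conjTranspose_mul, diagonal_conjTranspose, h,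
    conjTranspose_conjTranspose, ← star_eq_conjTranspose, Matrix.mul_assoc]

lemma star_mul_self_eq (z : ℂ) : star z * z = ((‖z‖ ^ 2 : ℝ) : ℂ) := by
  rw [Complex.star_def, mul_comm, Complex.mul_conj]
  norm_cast
  exact (Complex.sq_norm z).symm

lemma dot_star_self (x : m → ℂ) :
    star x ⬝ᵥ x = ((∑ i, ‖x i‖ ^ 2 : ℝ) : ℂ) := by
  rw [dotProduct]
  push_cast
  refine Finset.sum_congr rfl fun i _ => ?_
  have := star_mul_self_eq (x i)
  push_cast at this
  exact this

lemma qf_UDU (V : Matrix m m ℂ) (x : m → ℂ) (d : m → ℝ) :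
    star x ⬝ᵥ (V * diagonal (fun i => (d i : ℂ)) * star V) *ᵥ x
      = ((∑ j, d j * ‖(star V *ᵥ x) j‖ ^ 2 : ℝ) : ℂ) := by
  set y := star V *ᵥ x with hy
  have h1 : (V * diagonal (fun i => (d i : ℂ)) * star V) *ᵥ x
      = V *ᵥ (diagonal (fun i => (d i : ℂ)) *ᵥ y) := by
    rw [mulVec_mulVec, mulVec_mulVec]
  have h2 : star x ᵥ* V = star y := by
    rw [hy, star_mulVec, star_eq_conjTranspose, conjTranspose_conjTranspose]
  rw [h1, dotProduct_mulVec, h2, dotProduct]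
  push_cast
  refine Finset.sum_congr rfl fun j _ => ?_
  rw [mulVec_diagonal, Pi.star_apply]
  have h3 := star_mul_self_eq (y j)
  push_cast at h3 ⊢
  rw [← h3]
  ring

lemma qf_sum_eq (V : Matrix m m ℂ) (hV : V ∈ Matrix.unitaryGroup m ℂ) (x : m → ℂ) :
    ∑ j, ‖(star V *ᵥ x) j‖ ^ 2 = ∑ i, ‖x i‖ ^ 2 := by
  have h := qf_UDU V x (fun _ => 1)
  have h2 : V * diagonal (fun i : m => ((1 : ℝ) : ℂ)) * star V = 1 := by
    have : diagonal (fun _ : m => ((1 : ℝ) : ℂ)) = 1 := by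
      rw [show (fun _ : m => ((1 : ℝ) : ℂ)) = fun _ => (1 : ℂ) by norm_num, diagonal_one]
    rw [this, mul_one, Matrix.mem_unitaryGroup_iff.mp hV]
  rw [h2, one_mulVec, dot_star_self] at h
  simpa using Complex.ofReal_injective h.symm

lemma entry_conj (U A : Matrix m m ℂ) (j : m) :
    (star U * A * U) j j = star (fun i => U i j) ⬝ᵥ A *ᵥ (fun i => U i j) := by
  simp only [Matrix.mul_apply, dotProduct, Matrix.mulVec, star_eq_conjTranspose,
    conjTranspose_apply, Pi.star_apply, Finset.sum_mul, Finset.mul_sum]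
  rw [Finset.sum_comm]
  refine Finset.sum_congr rfl fun k _ => Finset.sum_congr rfl fun l _ => by ring

lemma col_norm_one (U : Matrix m m ℂ) (hU : star U * U = 1) (j : m) :
    ∑ i, ‖U i j‖ ^ 2 = 1 := by
  have h := congr_fun (congr_fun hU j) j
  have h1 : (star U * U) j j = ((∑ i, ‖U i j‖ ^ 2 : ℝ) : ℂ) := by
    rw [Matrix.mul_apply]
    push_cast
    refine Finset.sum_congr rfl fun i _ => ?_
    rw [star_eq_conjTranspose, conjTranspose_apply]
    have := star_mul_self_eq (U i j)
    push_cast at this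
    exact this
  rw [h1] at h
  have h2 : ((1 : Matrix m m ℂ)) j j = 1 := Matrix.one_apply_eq j
  rw [h2] at h
  exact_mod_cast h

lemma holder (A B : Matrix m m ℂ) (hB : B.IsHermitian) (c : ℝ)
    (hq : ∀ x : m → ℂ, ‖star x ⬝ᵥ A *ᵥ x‖ ≤ c * ∑ i, ‖x i‖ ^ 2) :
    ‖(A * B).trace‖ ≤ c * ∑ i, |hB.eigenvalues i| := by
  set U : Matrix m m ℂ := (hB.eigenvectorUnitary : Matrix m m ℂ)
  have hU : star U * U = 1 := Matrix.mem_unitaryGroup_iff'.mp hB.eigenvectorUnitary.2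
  have hspec : B = U * diagonal (RCLike.ofReal ∘ hB.eigenvalues) * star U := hB.spectral_theorem
  have htr : (A * B).trace = ((star U * A * U) * diagonal (RCLike.ofReal ∘ hB.eigenvalues)).trace := by
    conv_lhs => rw [hspec]
    rw [show A * (U * diagonal (RCLike.ofReal ∘ hB.eigenvalues) * star U)
        = (A * U * diagonal (RCLike.ofReal ∘ hB.eigenvalues)) * star U by
      simp only [Matrix.mul_assoc]]
    rw [trace_mul_comm]
    simp only [Matrix.mul_assoc]
  rw [htr]
  have hdiag : ((star U * A * U) * diagonal (RCLike.ofReal ∘ hB.eigenvalues)).trace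
      = ∑ j, (star U * A * U) j j * (hB.eigenvalues j : ℂ) := by
    rw [Matrix.trace]
    refine Finset.sum_congr rfl fun j _ => ?_
    rw [Matrix.diag_apply, Matrix.mul_diagonal]
    rfl
  rw [hdiag]
  calc ‖∑ j, (star U * A * U) j j * (hB.eigenvalues j : ℂ)‖
      ≤ ∑ j, ‖(star U * A * U) j j * (hB.eigenvalues j : ℂ)‖ := by
        exact norm_sum_le _ _
    _ ≤ ∑ j, c * |hB.eigenvalues j| := by
        refine Finset.sum_le_sum fun j _ => ?_
        rw [norm_mul]
        have h1 : ‖(star U * A * U) j j‖ ≤ c := by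
          have := hq (fun i => U i j)
          rw [col_norm_one U hU j, mul_one] at this
          rw [entry_conj]
          exact this
        have h2 : ‖(hB.eigenvalues j : ℂ)‖ = |hB.eigenvalues j| := Complex.norm_real _
        rw [h2]
        exact mul_le_mul_of_nonneg_right h1 (abs_nonneg _)
    _ = c * ∑ i, |hB.eigenvalues i| := by rw [Finset.mul_sum]

open scoped MatrixOrder in
lemma traceNorm_herm (B : Matrix m m ℂ) (hB : B.IsHermitian) :
    traceNorm B = ∑ i, |hB.eigenvalues i| := by
  have hM : (Bᴴ * B).PosSemidef := Matrix.posSemidef_conjTranspose_mul_self B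
  set U : Matrix m m ℂ := (hB.eigenvectorUnitary : Matrix m m ℂ) with hUdef
  have hU : star U * U = 1 := Matrix.mem_unitaryGroup_iff'.mp hB.eigenvectorUnitary.2
  have hspec : B = U * diagonal (fun i => ((hB.eigenvalues i : ℝ) : ℂ)) * star U := hB.spectral_theorem
  set N : Matrix m m ℂ := U * diagonal (fun i => ((|hB.eigenvalues i| : ℝ) : ℂ)) * star U with hNdef
  have hN2 : N ^ 2 = Bᴴ * B := by
    rw [pow_two, hNdef, UDU_mul U hU, hB.eq]
    have hd : (fun i => ((|hB.eigenvalues i| : ℝ) : ℂ) * ((|hB.eigenvalues i| : ℝ) : ℂ))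
        = fun i => ((hB.eigenvalues i : ℝ) : ℂ) * ((hB.eigenvalues i : ℝ) : ℂ) := by
      funext i; norm_cast; exact abs_mul_abs_self _
    rw [hd]
    conv_rhs => rw [hspec]
    rw [UDU_mul U hU]
  have hNpsd : N.PosSemidef := by
    have hdpsd : (diagonal (fun i => ((|hB.eigenvalues i| : ℝ) : ℂ))).PosSemidef :=
      posSemidef_diagonal_iff.mpr fun i => Complex.zero_le_real.mpr (abs_nonneg _)
    have := hdpsd.mul_mul_conjTranspose_same U
    rw [hNdef, star_eq_conjTranspose]
    exact this
  have hNsqrt : N = hM.1.cfc Real.sqrt := by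
    have h0 : (0 : Matrix m m ℂ) ≤ Bᴴ * B := hM.nonneg
    have hN0 : (0 : Matrix m m ℂ) ≤ N := hNpsd.nonneg
    rw [← hM.1.cfc_eq, ← cfcₙ_eq_cfc (hf0 := Real.sqrt_zero), ← CFC.sqrt_eq_real_sqrt _ h0,
      CFC.sqrt_unique (by rw [← pow_two]; exact hN2) hN0]
  have t1 : N.trace = ((∑ i, |hB.eigenvalues i| : ℝ) : ℂ) := by
    rw [hNdef, trace_UDU U hU]; norm_cast
  have t2 : (hM.1.cfc Real.sqrt).trace = ((∑ i, Real.sqrt (hM.1.eigenvalues i) : ℝ) : ℂ) := by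
    show ((hM.1.eigenvectorUnitary : Matrix m m ℂ) * diagonal (fun i => ((Real.sqrt (hM.1.eigenvalues i) : ℝ) : ℂ)) *
      (star hM.1.eigenvectorUnitary : Matrix m m ℂ)).trace = _
    rw [trace_UDU _ (Matrix.mem_unitaryGroup_iff'.mp hM.1.eigenvectorUnitary.2)]
    norm_cast
  have h3 : ((∑ i, Real.sqrt (hM.1.eigenvalues i) : ℝ) : ℂ) = ((∑ i, |hB.eigenvalues i| : ℝ) : ℂ) := by
    rw [← t2, ← hNsqrt, t1]
  have h4 : traceNorm B = ∑ i, Real.sqrt (hM.1.eigenvalues i) := rfl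
  rw [h4]
  exact_mod_cast h3

lemma frob_nonneg (A : Matrix m m ℂ) : 0 ≤ frobNorm A := Real.sqrt_nonneg _

lemma frob_sub_comm (A B : Matrix m m ℂ) : frobNorm (A - B) = frobNorm (B - A) := by
  unfold frobNorm
  congr 1
  refine Finset.sum_congr rfl fun i _ => Finset.sum_congr rfl fun j _ => ?_
  rw [Matrix.sub_apply, Matrix.sub_apply, show B i j - A i j = -(A i j - B i j) by ring,
    norm_neg]

lemma cauchy_schwarz_re (A B : Matrix m m ℂ) :
    |(Matrix.trace (Aᴴ * B)).re| ≤ frobNorm A * frobNorm B := by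
  classical
  set f : m × m → ℝ := fun p => ‖A p.2 p.1‖ with hf
  set g : m × m → ℝ := fun p => ‖B p.2 p.1‖ with hg
  have hfA : ∑ p : m × m, f p ^ 2 = ∑ i, ∑ j, ‖A i j‖ ^ 2 := by
    rw [Fintype.sum_prod_type]
    exact Finset.sum_comm
  have hgB : ∑ p : m × m, g p ^ 2 = ∑ i, ∑ j, ‖B i j‖ ^ 2 := by
    rw [Fintype.sum_prod_type]
    exact Finset.sum_comm
  have h1 : (Matrix.trace (Aᴴ * B)).re
      = ∑ p : m × m, ((starRingEnd ℂ) (A p.2 p.1) * B p.2 p.1).re := by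
    rw [Matrix.trace, Complex.re_sum, Fintype.sum_prod_type]
    refine Finset.sum_congr rfl fun j _ => ?_
    rw [Matrix.diag_apply, Matrix.mul_apply, Complex.re_sum]
    exact Finset.sum_congr rfl fun i _ => by rw [conjTranspose_apply]; rfl
  have h2 : |(Matrix.trace (Aᴴ * B)).re| ≤ ∑ p : m × m, f p * g p := by
    rw [h1]
    refine (Finset.abs_sum_le_sum_abs _ _).trans ?_
    refine Finset.sum_le_sum fun p _ => ?_
    refine (Complex.abs_re_le_norm _).trans ?_
    rw [norm_mul, Complex.norm_conj]
  have h3 : ∑ p : m × m, f p * g p ≤ frobNorm A * frobNorm B := by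
    have hnn : 0 ≤ ∑ p : m × m, f p * g p :=
      Finset.sum_nonneg fun p _ => mul_nonneg (norm_nonneg _) (norm_nonneg _)
    have hcs := Finset.sum_mul_sq_le_sq_mul_sq Finset.univ f g
    have := Real.sqrt_le_sqrt hcs
    rw [Real.sqrt_sq hnn, Real.sqrt_mul (Finset.sum_nonneg fun p _ => sq_nonneg (f p))] at this
    refine this.trans_eq ?_
    unfold frobNorm
    rw [← hfA, ← hgB]
  exact h2.trans h3

lemma frob_sq_eq_sum_sq (B : Matrix m m ℂ) (hB : B.IsHermitian) :
    ∑ i, ∑ j, ‖B i j‖ ^ 2 = ∑ i, hB.eigenvalues i ^ 2 := by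
  set U : Matrix m m ℂ := (hB.eigenvectorUnitary : Matrix m m ℂ)
  have hU : star U * U = 1 := Matrix.mem_unitaryGroup_iff'.mp hB.eigenvectorUnitary.2
  have hspec : B = U * diagonal (fun i => ((hB.eigenvalues i : ℝ) : ℂ)) * star U :=
    hB.spectral_theorem
  have e1 : Matrix.trace (Bᴴ * B) = ((∑ j, ∑ i, ‖B i j‖ ^ 2 : ℝ) : ℂ) := by
    rw [Matrix.trace]
    push_cast
    refine Finset.sum_congr rfl fun j _ => ?_
    rw [Matrix.diag_apply, Matrix.mul_apply]
    push_cast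
    refine Finset.sum_congr rfl fun i _ => ?_
    rw [conjTranspose_apply]
    have := star_mul_self_eq (B i j)
    push_cast at this
    exact this
  have e2 : Matrix.trace (Bᴴ * B) = ((∑ i, hB.eigenvalues i ^ 2 : ℝ) : ℂ) := by
    rw [hB.eq]
    conv_lhs => rw [hspec]
    rw [UDU_mul U hU, trace_UDU U hU]
    push_cast
    exact Finset.sum_congr rfl fun i _ => by ring
  have h := e1.symm.trans e2
  have h2 : (∑ j, ∑ i, ‖B i j‖ ^ 2) = ∑ i, hB.eigenvalues i ^ 2 := by exact_mod_cast h
  rw [← h2]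
  exact Finset.sum_comm

lemma frob_le_traceNorm (B : Matrix m m ℂ) (hB : B.IsHermitian) :
    frobNorm B ≤ traceNorm B := by
  rw [traceNorm_herm B hB]
  unfold frobNorm
  rw [frob_sq_eq_sum_sq B hB]
  have h1 : ∑ i, hB.eigenvalues i ^ 2 ≤ (∑ i, |hB.eigenvalues i|) ^ 2 := by
    have := Finset.sum_sq_le_sq_sum_of_nonneg (f := fun i => |hB.eigenvalues i|)
      (s := Finset.univ) (fun i _ => abs_nonneg _)
    simpa [sq_abs] using this
  have := Real.sqrt_le_sqrt h1
  rwa [Real.sqrt_sq (Finset.sum_nonneg fun i _ => abs_nonneg _)] at this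

lemma real_sign_mul_self (x : ℝ) : Real.sign x * x = |x| := by
  rcases lt_trichotomy x 0 with h | h | h
  · rw [Real.sign_of_neg h, abs_of_neg h]; ring
  · rw [h]; simp
  · rw [Real.sign_of_pos h, abs_of_pos h]; ring

lemma matSign_eq (A : Matrix m m ℂ) (hA : A.IsHermitian) :
    matSign A = (hA.eigenvectorUnitary : Matrix m m ℂ) *
      diagonal (fun i => ((Real.sign (hA.eigenvalues i) : ℝ) : ℂ)) *
      star (hA.eigenvectorUnitary : Matrix m m ℂ) := dif_pos hA

lemma rangeProj_eq (A : Matrix m m ℂ) (hA : A.IsHermitian) :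
    rangeProj A = (hA.eigenvectorUnitary : Matrix m m ℂ) *
      diagonal (fun i => (((if hA.eigenvalues i = 0 then 0 else 1 : ℝ)) : ℂ)) *
      star (hA.eigenvectorUnitary : Matrix m m ℂ) := by
  rw [rangeProj, dif_pos hA]
  have : (fun i => (if hA.eigenvalues i = 0 then (0 : ℂ) else 1))
      = fun i => (((if hA.eigenvalues i = 0 then 0 else 1 : ℝ)) : ℂ) := by
    funext i; split <;> norm_num
  rw [this]

lemma matSign_herm (A : Matrix m m ℂ) (hA : A.IsHermitian) : (matSign A).IsHermitian := by
  rw [matSign_eq A hA]; exact UDU_herm _ _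

lemma rangeProj_herm (A : Matrix m m ℂ) (hA : A.IsHermitian) : (rangeProj A).IsHermitian := by
  rw [rangeProj_eq A hA]; exact UDU_herm _ _

lemma kill_fun (P V : Matrix m m ℂ) (μ : m → ℝ) (f : ℝ → ℝ) (hf : f 0 = 0)
    (hV : star V * V = 1)
    (h : P * (V * diagonal (fun i => ((μ i : ℝ) : ℂ)) * star V) = 0) :
    P * (V * diagonal (fun i => ((f (μ i) : ℝ) : ℂ)) * star V) = 0 := by
  have h1 : P * V * diagonal (fun i => ((μ i : ℝ) : ℂ)) = 0 := by
    have h0 := congrArg (fun M => M * V) h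
    simp only [Matrix.zero_mul] at h0
    calc P * V * diagonal (fun i => ((μ i : ℝ) : ℂ))
        = P * V * (diagonal (fun i => ((μ i : ℝ) : ℂ)) * (star V * V)) := by rw [hV, mul_one]
      _ = P * (V * diagonal (fun i => ((μ i : ℝ) : ℂ)) * star V) * V := by
          simp only [Matrix.mul_assoc]
      _ = 0 := h0
  have h2 : ∀ i j, (P * V) i j * ((μ j : ℝ) : ℂ) = 0 := by
    intro i j
    have := congr_fun (congr_fun h1 i) j
    rwa [Matrix.mul_diagonal] at this
  have h3 : P * V * diagonal (fun i => ((f (μ i) : ℝ) : ℂ)) = 0 := by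
    ext i j
    rw [Matrix.mul_diagonal]
    by_cases hμ : μ j = 0
    · rw [hμ, hf]
      simp
    · have hz : (P * V) i j = 0 := by
        have h4 := h2 i j
        have : ((μ j : ℝ) : ℂ) ≠ 0 := by exact_mod_cast hμ
        exact (mul_eq_zero.mp h4).resolve_right this
      rw [hz, zero_mul, Matrix.zero_apply]
  calc P * ((V * diagonal (fun i => ((f (μ i) : ℝ) : ℂ))) * star V)
      = (P * V * diagonal (fun i => ((f (μ i) : ℝ) : ℂ))) * star V := by
        simp only [Matrix.mul_assoc]
    _ = 0 := by rw [h3, Matrix.zero_mul]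

lemma kill_matSign (P G : Matrix m m ℂ) (hG : G.IsHermitian) (h : P * G = 0) :
    P * matSign G = 0 := by
  rw [matSign_eq G hG]
  refine kill_fun P _ hG.eigenvalues Real.sign Real.sign_zero
    (Matrix.mem_unitaryGroup_iff'.mp hG.eigenvectorUnitary.2) ?_
  have hspec : G = (hG.eigenvectorUnitary : Matrix m m ℂ) *
      diagonal (fun i => ((hG.eigenvalues i : ℝ) : ℂ)) *
      star (hG.eigenvectorUnitary : Matrix m m ℂ) := hG.spectral_theorem
  rw [← hspec]
  exact h

lemma kill_rangeProj (P G : Matrix m m ℂ) (hG : G.IsHermitian) (h : P * G = 0) :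
    P * rangeProj G = 0 := by
  rw [rangeProj_eq G hG]
  refine kill_fun P _ hG.eigenvalues (fun x => if x = 0 then 0 else 1) (by norm_num)
    (Matrix.mem_unitaryGroup_iff'.mp hG.eigenvectorUnitary.2) ?_
  have hspec : G = (hG.eigenvectorUnitary : Matrix m m ℂ) *
      diagonal (fun i => ((hG.eigenvalues i : ℝ) : ℂ)) *
      star (hG.eigenvectorUnitary : Matrix m m ℂ) := hG.spectral_theorem
  rw [← hspec]
  exact h

lemma trace_matSign_self (B : Matrix m m ℂ) (hB : B.IsHermitian) :
    Matrix.trace (matSign B * B) = ((traceNorm B : ℝ) : ℂ) := by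
  set U : Matrix m m ℂ := (hB.eigenvectorUnitary : Matrix m m ℂ)
  have hU : star U * U = 1 := Matrix.mem_unitaryGroup_iff'.mp hB.eigenvectorUnitary.2
  have hspec : B = U * diagonal (fun i => ((hB.eigenvalues i : ℝ) : ℂ)) * star U :=
    hB.spectral_theorem
  have h5 : matSign B * B = matSign B * (U * diagonal (fun i => ((hB.eigenvalues i : ℝ) : ℂ)) * star U) :=
    congrArg _ hspec
  rw [h5, matSign_eq B hB, UDU_mul U hU, trace_UDU U hU, traceNorm_herm B hB]
  push_cast
  refine Finset.sum_congr rfl fun i _ => ?_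
  rw [show ((Real.sign (hB.eigenvalues i) : ℝ) : ℂ) * ((hB.eigenvalues i : ℝ) : ℂ)
    = ((Real.sign (hB.eigenvalues i) * hB.eigenvalues i : ℝ) : ℂ) by push_cast; ring]
  rw [real_sign_mul_self]

lemma quad_le_opNorm (A : Matrix m m ℂ) (x : m → ℂ) :
    ‖star x ⬝ᵥ A *ᵥ x‖ ≤ opNorm A * ∑ i, ‖x i‖ ^ 2 := by
  classical
  set x' : EuclideanSpace ℂ m := (WithLp.equiv 2 (m → ℂ)).symm x with hx'
  have hTA : Matrix.toEuclideanCLM (𝕜 := ℂ) A x' = (WithLp.equiv 2 (m → ℂ)).symm (A *ᵥ x) := by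
    rw [hx']; rfl
  have hinner : (inner ℂ x' (Matrix.toEuclideanCLM (𝕜 := ℂ) A x') : ℂ) = star x ⬝ᵥ A *ᵥ x := by
    rw [hTA, hx', PiLp.inner_apply]
    simp only [dotProduct]
    refine Finset.sum_congr rfl fun i _ => ?_
    simp [RCLike.inner_apply, mul_comm]
  have hn : ‖x'‖ ^ 2 = ∑ i, ‖x i‖ ^ 2 := by
    rw [EuclideanSpace.norm_eq, Real.sq_sqrt (Finset.sum_nonneg fun i _ => sq_nonneg _)]
    rfl
  calc ‖star x ⬝ᵥ A *ᵥ x‖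
      = ‖(inner ℂ x' (Matrix.toEuclideanCLM (𝕜 := ℂ) A x') : ℂ)‖ := by rw [hinner]
    _ ≤ ‖x'‖ * ‖Matrix.toEuclideanCLM (𝕜 := ℂ) A x'‖ := norm_inner_le_norm _ _
    _ ≤ ‖x'‖ * (opNorm A * ‖x'‖) := by
        refine mul_le_mul_of_nonneg_left ?_ (norm_nonneg _)
        exact (Matrix.toEuclideanCLM (𝕜 := ℂ) A).le_opNorm x'
    _ = opNorm A * ‖x'‖ ^ 2 := by ring
    _ = opNorm A * ∑ i, ‖x i‖ ^ 2 := by rw [hn]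

lemma qf_idem_eq (S : Matrix m m ℂ) (hS : S.IsHermitian) (hidem : S * S = S) (x : m → ℂ) :
    star x ⬝ᵥ S *ᵥ x = ((∑ i, ‖(S *ᵥ x) i‖ ^ 2 : ℝ) : ℂ) := by
  have h1 : S = Sᴴ * S := by rw [hS.eq, hidem]
  conv_lhs => rw [h1]
  rw [← Matrix.mulVec_mulVec, Matrix.dotProduct_mulVec, ← Matrix.star_mulVec, dot_star_self]

lemma qf_idem_le (S : Matrix m m ℂ) (hS : S.IsHermitian) (hidem : S * S = S) (x : m → ℂ) :
    (star x ⬝ᵥ S *ᵥ x).re ≤ ∑ i, ‖x i‖ ^ 2 := by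
  have hS' : (1 - S).IsHermitian := by
    unfold Matrix.IsHermitian
    rw [conjTranspose_sub, conjTranspose_one, hS.eq]
  have hidem' : (1 - S) * (1 - S) = 1 - S := by
    have h : (1 - S) * (1 - S) = 1 - S - S + S * S := by noncomm_ring
    rw [h, hidem]
    abel
  have hsplit : star x ⬝ᵥ S *ᵥ x + star x ⬝ᵥ (1 - S) *ᵥ x
      = ((∑ i, ‖x i‖ ^ 2 : ℝ) : ℂ) := by
    rw [← dotProduct_add, ← Matrix.add_mulVec,
      show S + (1 - S) = (1 : Matrix m m ℂ) by abel, Matrix.one_mulVec, dot_star_self]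
  have h2 := qf_idem_eq (1 - S) hS' hidem' x
  have h3 : (star x ⬝ᵥ S *ᵥ x).re
      = (∑ i, ‖x i‖ ^ 2) - ∑ i, ‖((1 - S) *ᵥ x) i‖ ^ 2 := by
    have h4 := congrArg Complex.re hsplit
    rw [Complex.add_re, h2] at h4
    simp only [Complex.ofReal_re] at h4
    linarith
  have h5 : 0 ≤ ∑ i, ‖((1 - S) *ᵥ x) i‖ ^ 2 :=
    Finset.sum_nonneg fun i _ => sq_nonneg _
  rw [h3]
  linarith

lemma aux_perp_left (p d : Matrix m m ℂ) (hp : p * p = p) :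
    p * (d - (p * d + d * p - p * d * p)) = 0 := by
  have h1 : p * (d - (p * d + d * p - p * d * p))
      = p * d - (p * p) * d - p * (d * p) + (p * p) * (d * p) := by noncomm_ring
  rw [h1, hp]
  noncomm_ring

lemma aux_perp_right (p d : Matrix m m ℂ) (hp : p * p = p) :
    (d - (p * d + d * p - p * d * p)) * p = 0 := by
  have h1 : (d - (p * d + d * p - p * d * p)) * p
      = d * p - p * (d * p) - d * (p * p) + p * (d * (p * p)) := by noncomm_ring
  rw [h1, hp]
  noncomm_ring

lemma rangeProj_idem (A : Matrix m m ℂ) (hA : A.IsHermitian) :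
    rangeProj A * rangeProj A = rangeProj A := by
  have hU : star (hA.eigenvectorUnitary : Matrix m m ℂ) * (hA.eigenvectorUnitary : Matrix m m ℂ) = 1 :=
    Matrix.mem_unitaryGroup_iff'.mp hA.eigenvectorUnitary.2
  rw [rangeProj_eq A hA, UDU_mul _ hU]
  have h2 : (fun i => (((if hA.eigenvalues i = 0 then 0 else 1 : ℝ)) : ℂ)
        * (((if hA.eigenvalues i = 0 then 0 else 1 : ℝ)) : ℂ))
      = fun i => (((if hA.eigenvalues i = 0 then 0 else 1 : ℝ)) : ℂ) := by
    funext i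
    by_cases h : hA.eigenvalues i = 0 <;> simp [h]
  rw [h2]

lemma rangeProj_mul_self (A : Matrix m m ℂ) (hA : A.IsHermitian) :
    rangeProj A * A = A := by
  set U : Matrix m m ℂ := (hA.eigenvectorUnitary : Matrix m m ℂ)
  have hU : star U * U = 1 := Matrix.mem_unitaryGroup_iff'.mp hA.eigenvectorUnitary.2
  have hspec : A = U * diagonal (fun i => ((hA.eigenvalues i : ℝ) : ℂ)) * star U :=
    hA.spectral_theorem
  have h1 : rangeProj A * A
      = rangeProj A * (U * diagonal (fun i => ((hA.eigenvalues i : ℝ) : ℂ)) * star U) :=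
    congrArg _ hspec
  rw [h1, rangeProj_eq A hA, UDU_mul _ hU]
  have h2 : (fun i => (((if hA.eigenvalues i = 0 then 0 else 1 : ℝ)) : ℂ) * ((hA.eigenvalues i : ℝ) : ℂ))
      = fun i => ((hA.eigenvalues i : ℝ) : ℂ) := by
    funext i
    by_cases h : hA.eigenvalues i = 0 <;> simp [h]
  rw [h2, ← hspec]

lemma matSign_mul_rangeProj (A : Matrix m m ℂ) (hA : A.IsHermitian) :
    matSign A * rangeProj A = matSign A := by
  have hU : star (hA.eigenvectorUnitary : Matrix m m ℂ) * (hA.eigenvectorUnitary : Matrix m m ℂ) = 1 :=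
    Matrix.mem_unitaryGroup_iff'.mp hA.eigenvectorUnitary.2
  rw [matSign_eq A hA, rangeProj_eq A hA, UDU_mul _ hU]
  have h2 : (fun i => ((Real.sign (hA.eigenvalues i) : ℝ) : ℂ)
        * (((if hA.eigenvalues i = 0 then 0 else 1 : ℝ)) : ℂ))
      = fun i => ((Real.sign (hA.eigenvalues i) : ℝ) : ℂ) := by
    funext i
    by_cases h : hA.eigenvalues i = 0 <;> simp [h, Real.sign_zero]
  rw [h2, ← matSign_eq A hA]

lemma qf_sign_le_proj (A : Matrix m m ℂ) (hA : A.IsHermitian) (x : m → ℂ) :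
    ‖star x ⬝ᵥ matSign A *ᵥ x‖ ≤ (star x ⬝ᵥ rangeProj A *ᵥ x).re := by
  rw [matSign_eq A hA, rangeProj_eq A hA, qf_UDU, qf_UDU, Complex.norm_real, Real.norm_eq_abs, Complex.ofReal_re]
  set y := star (hA.eigenvectorUnitary : Matrix m m ℂ) *ᵥ x
  refine (Finset.abs_sum_le_sum_abs _ _).trans ?_
  refine Finset.sum_le_sum fun j _ => ?_
  rw [abs_mul, abs_of_nonneg (sq_nonneg (‖y j‖))]
  refine mul_le_mul_of_nonneg_right ?_ (sq_nonneg _)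
  by_cases h : hA.eigenvalues j = 0
  · simp [h, Real.sign_zero]
  · rcases lt_or_gt_of_ne h with h' | h'
    · rw [Real.sign_of_neg h', if_neg h]; norm_num
    · rw [Real.sign_of_pos h', if_neg h]; norm_num

lemma trace_mul_pTp_zero (P A B : Matrix m m ℂ) (h1 : A * P = 0) (h2 : P * A = 0) :
    Matrix.trace (A * (P * B + B * P - P * B * P)) = 0 := by
  have e1 : A * (P * B) = 0 := by rw [← Matrix.mul_assoc, h1, Matrix.zero_mul]
  have e2 : Matrix.trace (A * (B * P)) = 0 := by
    rw [show A * (B * P) = (A * B) * P from (Matrix.mul_assoc _ _ _).symm, trace_mul_comm,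
      ← Matrix.mul_assoc, h2, Matrix.zero_mul, trace_zero]
  have e3 : A * (P * B * P) = 0 := by
    rw [show P * B * P = P * (B * P) from Matrix.mul_assoc _ _ _, ← Matrix.mul_assoc, h1,
      Matrix.zero_mul]
  rw [mul_sub, mul_add, trace_sub, trace_add, e1, e2, e3]
  simp

lemma pTp_herm' (p d : Matrix m m ℂ) (hp : p.IsHermitian) (hd : d.IsHermitian) :
    (p * d + d * p - p * d * p).IsHermitian := by
  have h1 : (p * d)ᴴ = d * p := by rw [conjTranspose_mul, hp.eq, hd.eq]
  have h2 : (d * p)ᴴ = p * d := by rw [conjTranspose_mul, hp.eq, hd.eq]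
  have h3 : (p * d * p)ᴴ = p * d * p := by
    rw [conjTranspose_mul, h1, hp.eq, Matrix.mul_assoc]
  unfold Matrix.IsHermitian
  rw [conjTranspose_sub, conjTranspose_add, h1, h2, h3]
  abel

lemma pTp_herm (p d : Matrix m m ℂ) (hp : p.IsHermitian) (hd : d.IsHermitian) :
    (d - (p * d + d * p - p * d * p)).IsHermitian := by
  unfold Matrix.IsHermitian
  rw [conjTranspose_sub, hd.eq, (pTp_herm' p d hp hd).eq]

end DC

open DC in
/-- **Exact recovery via a dual certificate.**  If `Δ ≠ 0` is Hermitian with `ℛΔ = 0` and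
`‖Δ_T‖₂ < n²‖Δ_T⊥‖₂`, and there is `Y` in the range of the self-adjoint map `ℛ` with
`‖𝒫_T Y − sign ρ‖₂ ≤ 1/(2n²)` and `‖𝒫_T⊥ Y‖ ≤ 1/2`, then `‖ρ + Δ‖₁ > ‖ρ‖₁`. -/
theorem dual_certificate_recovery {n : ℕ} (hn : 0 < n)
    (ρ : Matrix (Fin n) (Fin n) ℂ) (hρ : ρ.IsHermitian)
    (R : Matrix (Fin n) (Fin n) ℂ →ₗ[ℝ] Matrix (Fin n) (Fin n) ℂ)
    (hRsa : ∀ A B : Matrix (Fin n) (Fin n) ℂ,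
      Matrix.trace ((R A)ᴴ * B) = Matrix.trace (Aᴴ * R B))
    (Δ : Matrix (Fin n) (Fin n) ℂ) (hΔ : Δ.IsHermitian) (hΔne : Δ ≠ 0)
    (hker : R Δ = 0)
    (hscale : frobNorm (projT ρ Δ) < n ^ 2 * frobNorm (Δ - projT ρ Δ))
    (Y : Matrix (Fin n) (Fin n) ℂ) (hY : Y.IsHermitian)
    (hrange : ∃ Z, R Z = Y)
    (hcert1 : frobNorm (projT ρ Y - matSign ρ) ≤ 1 / (2 * n ^ 2))
    (hcert2 : opNorm (Y - projT ρ Y) ≤ 1 / 2) :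
    traceNorm ρ < traceNorm (ρ + Δ) := by
  classical
  obtain ⟨Z, hZ⟩ := hrange
  have h2a : (0:ℝ) < 2 * (n:ℝ) ^ 2 := by positivity
  set P : Matrix (Fin n) (Fin n) ℂ := rangeProj ρ with hPdef
  set s : Matrix (Fin n) (Fin n) ℂ := matSign ρ with hsdef
  set YT : Matrix (Fin n) (Fin n) ℂ := projT ρ Y with hYTdef
  set ΔT : Matrix (Fin n) (Fin n) ℂ := projT ρ Δ with hΔTdef
  set E : Matrix (Fin n) (Fin n) ℂ := Δ - ΔT with hEdef
  set Yp : Matrix (Fin n) (Fin n) ℂ := Y - YT with hYpdef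
  have hPherm : P.IsHermitian := rangeProj_herm ρ hρ
  have hsherm : s.IsHermitian := matSign_herm ρ hρ
  have hPP : P * P = P := rangeProj_idem ρ hρ
  have hPρ : P * ρ = ρ := rangeProj_mul_self ρ hρ
  have hsP : s * P = s := matSign_mul_rangeProj ρ hρ
  have hΔTE : ΔT = P * Δ + Δ * P - P * Δ * P := by rw [hΔTdef, hPdef]; rfl
  have hYTE : YT = P * Y + Y * P - P * Y * P := by rw [hYTdef, hPdef]; rfl
  have hEalt : E = Δ - (P * Δ + Δ * P - P * Δ * P) := by rw [hEdef, hΔTE]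
  have hYpalt : Yp = Y - (P * Y + Y * P - P * Y * P) := by rw [hYpdef, hYTE]
  have hPE : P * E = 0 := by rw [hEalt]; exact aux_perp_left P Δ hPP
  have hEP : E * P = 0 := by rw [hEalt]; exact aux_perp_right P Δ hPP
  have hPYp : P * Yp = 0 := by rw [hYpalt]; exact aux_perp_left P Y hPP
  have hYpP : Yp * P = 0 := by rw [hYpalt]; exact aux_perp_right P Y hPP
  have hEherm : E.IsHermitian := by rw [hEalt]; exact pTp_herm P Δ hPherm hΔ
  have hΔTherm : ΔT.IsHermitian := by rw [hΔTE]; exact pTp_herm' P Δ hPherm hΔ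
  have hYTherm : YT.IsHermitian := by rw [hYTE]; exact pTp_herm' P Y hPherm hY
  set q : Matrix (Fin n) (Fin n) ℂ := matSign E with hqdef
  have hqherm : q.IsHermitian := matSign_herm E hEherm
  have hPq : P * q = 0 := kill_matSign P E hEherm hPE
  have hqP : q * P = 0 := by
    have h := congrArg Matrix.conjTranspose hPq
    rwa [conjTranspose_mul, hqherm.eq, hPherm.eq, conjTranspose_zero] at h
  set Q : Matrix (Fin n) (Fin n) ℂ := rangeProj E with hQdef
  have hQherm : Q.IsHermitian := rangeProj_herm E hEherm
  have hQQ : Q * Q = Q := rangeProj_idem E hEherm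
  have hPQ : P * Q = 0 := kill_rangeProj P E hEherm hPE
  have hQP : Q * P = 0 := by
    have h := congrArg Matrix.conjTranspose hPQ
    rwa [conjTranspose_mul, hQherm.eq, hPherm.eq, conjTranspose_zero] at h
  -- quadratic form bound for W = s + q
  have hWquad : ∀ x : Fin n → ℂ,
      ‖star x ⬝ᵥ (s + q) *ᵥ x‖ ≤ 1 * ∑ i, ‖x i‖ ^ 2 := by
    intro x
    have hsplit : star x ⬝ᵥ (s + q) *ᵥ x = star x ⬝ᵥ s *ᵥ x + star x ⬝ᵥ q *ᵥ x := by
      rw [Matrix.add_mulVec, dotProduct_add]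
    have h2 : ‖star x ⬝ᵥ s *ᵥ x‖ ≤ (star x ⬝ᵥ P *ᵥ x).re := qf_sign_le_proj ρ hρ x
    have h3 : ‖star x ⬝ᵥ q *ᵥ x‖ ≤ (star x ⬝ᵥ Q *ᵥ x).re := qf_sign_le_proj E hEherm x
    have hPQherm : (P + Q).IsHermitian := hPherm.add hQherm
    have hPQidem : (P + Q) * (P + Q) = P + Q := by
      rw [add_mul, mul_add, mul_add, hPP, hQQ, hPQ, hQP]
      simp
    have h4 := qf_idem_le (P + Q) hPQherm hPQidem x
    have h5 : (star x ⬝ᵥ P *ᵥ x).re + (star x ⬝ᵥ Q *ᵥ x).re = (star x ⬝ᵥ (P + Q) *ᵥ x).re := by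
      rw [Matrix.add_mulVec, dotProduct_add, Complex.add_re]
    calc ‖star x ⬝ᵥ (s + q) *ᵥ x‖
        ≤ ‖star x ⬝ᵥ s *ᵥ x‖ + ‖star x ⬝ᵥ q *ᵥ x‖ := by
          rw [hsplit]; exact norm_add_le _ _
      _ ≤ (star x ⬝ᵥ P *ᵥ x).re + (star x ⬝ᵥ Q *ᵥ x).re := add_le_add h2 h3
      _ = (star x ⬝ᵥ (P + Q) *ᵥ x).re := h5
      _ ≤ ∑ i, ‖x i‖ ^ 2 := h4
      _ = 1 * ∑ i, ‖x i‖ ^ 2 := (one_mul _).symm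
  have hρΔherm : (ρ + Δ).IsHermitian := hρ.add hΔ
  -- trace identities
  have tsρ : Matrix.trace (s * ρ) = ((traceNorm ρ : ℝ) : ℂ) := trace_matSign_self ρ hρ
  have tqρ : Matrix.trace (q * ρ) = 0 := by
    rw [← hPρ, ← Matrix.mul_assoc, hqP, Matrix.zero_mul, Matrix.trace_zero]
  have tqE : Matrix.trace (q * E) = ((traceNorm E : ℝ) : ℂ) := trace_matSign_self E hEherm
  have tqΔT : Matrix.trace (q * ΔT) = 0 := by rw [hΔTE]; exact trace_mul_pTp_zero P q Δ hqP hPq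
  have tsE : Matrix.trace (s * E) = 0 := by
    rw [← hsP, Matrix.mul_assoc, hPE, Matrix.mul_zero, Matrix.trace_zero]
  have tYTE : Matrix.trace (YT * E) = 0 := by
    rw [Matrix.trace_mul_comm, hYTE]
    exact trace_mul_pTp_zero P E Y hEP hPE
  have tYpΔT : Matrix.trace (Yp * ΔT) = 0 := by
    rw [hΔTE]; exact trace_mul_pTp_zero P Yp Δ hYpP hPYp
  have tYΔ : Matrix.trace (Y * Δ) = 0 := by
    have h := hRsa Z Δ
    rw [hZ, hker, hY.eq] at h
    simpa using h
  have hΔsplit : Δ = ΔT + E := by rw [hEdef]; abel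
  have tqΔ : Matrix.trace (q * Δ) = ((traceNorm E : ℝ) : ℂ) := by
    conv_lhs => rw [hΔsplit]
    rw [mul_add, Matrix.trace_add, tqΔT, tqE, zero_add]
  have tsYTE : Matrix.trace ((s - YT) * E) = 0 := by
    rw [sub_mul, Matrix.trace_sub, tsE, tYTE, sub_zero]
  have tsYTΔ : Matrix.trace ((s - YT) * Δ) = Matrix.trace ((s - YT) * ΔT) := by
    conv_lhs => rw [hΔsplit]
    rw [mul_add, Matrix.trace_add, tsYTE, add_zero]
  have tYpΔ : Matrix.trace (Yp * Δ) = Matrix.trace (Yp * E) := by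
    conv_lhs => rw [hΔsplit]
    rw [mul_add, Matrix.trace_add, tYpΔT, zero_add]
  have tsΔ : Matrix.trace (s * Δ)
      = Matrix.trace ((s - YT) * ΔT) - Matrix.trace (Yp * E) := by
    have hdecomp : s * Δ = (s - YT) * Δ - Yp * Δ + Y * Δ := by
      rw [hYpdef]; noncomm_ring
    rw [hdecomp, Matrix.trace_add, Matrix.trace_sub, tYΔ, tsYTΔ, tYpΔ, add_zero]
  have tW : Matrix.trace ((s + q) * (ρ + Δ))
      = ((traceNorm ρ : ℝ) : ℂ)
        + (Matrix.trace ((s - YT) * ΔT) - Matrix.trace (Yp * E))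
        + ((traceNorm E : ℝ) : ℂ) := by
    have hexp : (s + q) * (ρ + Δ) = s * ρ + s * Δ + q * ρ + q * Δ := by noncomm_ring
    rw [hexp, Matrix.trace_add, Matrix.trace_add, Matrix.trace_add, tsρ, tqρ, tqΔ, tsΔ]
    ring
  -- bounds
  push_cast at hcert1 hscale
  have hb1 : |(Matrix.trace ((s - YT) * ΔT)).re| ≤ (1 / (2 * (n:ℝ) ^ 2)) * frobNorm ΔT := by
    have hXherm : (s - YT).IsHermitian := hsherm.sub hYTherm
    have hcs := cauchy_schwarz_re (s - YT) ΔT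
    rw [hXherm.eq] at hcs
    refine hcs.trans ?_
    have hle : frobNorm (s - YT) ≤ 1 / (2 * (n:ℝ) ^ 2) := by
      rw [frob_sub_comm]
      exact hcert1
    exact mul_le_mul_of_nonneg_right hle (frob_nonneg _)
  have hb2 : ‖Matrix.trace (Yp * E)‖ ≤ (1 / 2) * traceNorm E := by
    have hq' : ∀ x : Fin n → ℂ,
        ‖star x ⬝ᵥ Yp *ᵥ x‖ ≤ (1 / 2) * ∑ i, ‖x i‖ ^ 2 := by
      intro x
      refine (quad_le_opNorm Yp x).trans ?_
      exact mul_le_mul_of_nonneg_right hcert2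
        (Finset.sum_nonneg fun i _ => sq_nonneg _)
    have h := holder Yp E hEherm (1 / 2) hq'
    rwa [← traceNorm_herm E hEherm] at h
  have hdual : (Matrix.trace ((s + q) * (ρ + Δ))).re ≤ traceNorm (ρ + Δ) := by
    have h := holder (s + q) (ρ + Δ) hρΔherm 1 hWquad
    rw [← traceNorm_herm (ρ + Δ) hρΔherm, one_mul] at h
    exact (Complex.re_le_norm _).trans h
  have hfrobE : frobNorm E ≤ traceNorm E := frob_le_traceNorm E hEherm
  have hre : (Matrix.trace ((s + q) * (ρ + Δ))).re
      = traceNorm ρ + ((Matrix.trace ((s - YT) * ΔT)).re - (Matrix.trace (Yp * E)).re)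
        + traceNorm E := by
    rw [tW]
    simp [Complex.add_re, Complex.sub_re, Complex.ofReal_re]
  have hratio : (1 / (2 * (n:ℝ) ^ 2)) * frobNorm ΔT < (1 / 2) * frobNorm E := by
    rw [div_mul_eq_mul_div, one_mul, div_mul_eq_mul_div, one_mul,
      div_lt_div_iff₀ h2a two_pos]
    nlinarith [hscale]
  have hbre2 : (Matrix.trace (Yp * E)).re ≤ (1 / 2) * traceNorm E :=
    (Complex.re_le_norm _).trans hb2
  have hbre1 : -((1 / (2 * (n:ℝ) ^ 2)) * frobNorm ΔT) ≤ (Matrix.trace ((s - YT) * ΔT)).re :=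
    (abs_le.mp hb1).1
  have hmain : traceNorm ρ < (Matrix.trace ((s + q) * (ρ + Δ))).re := by
    rw [hre]
    linarith [hbre1, hbre2, hfrobE, hratio]
  exact lt_of_lt_of_le hmain hdual
end

section
/- Vector Bernstein inequality: Let X₁,…,X_m be independent zero-mean random vectors in a (finite-dimensional) inner product space, V = ∑_i E[‖X_i‖²], and N = ‖∑_{i=1}^m X_i‖. Then for 0 < t ≤ V/(max ‖X_i‖), Pr[N ≥ √V + t] ≤ exp(−t²/(4V)). -/
open MeasureTheory ProbabilityTheory Finset

set_option linter.unusedSectionVars false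
set_option linter.unusedVariables false
namespace VB

lemma exp_le_quad {x : ℝ} (hx : |x| ≤ 1) : Real.exp x ≤ 1 + x + x ^ 2 := by
  have h := Real.exp_bound hx (n := 2) (by norm_num)
  have h2 : ∑ m ∈ Finset.range 2, x ^ m / (m.factorial : ℝ) = 1 + x := by
    simp [Finset.sum_range_succ]
  rw [h2] at h
  have h3 := (abs_le.mp h).2
  have h4 : |x| ^ 2 = x ^ 2 := sq_abs x
  norm_num at h3
  nlinarith [sq_nonneg x]

lemma integral_sqrt_le {α : Type*} [MeasurableSpace α] (ν : Measure α) [IsProbabilityMeasure ν]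
    {f : α → ℝ} (hf : Integrable f ν) (h0 : 0 ≤ᵐ[ν] f) :
    ∫ x, Real.sqrt (f x) ∂ν ≤ Real.sqrt (∫ x, f x ∂ν) := by
  set a := ∫ x, f x ∂ν with ha
  have han : 0 ≤ a := integral_nonneg_of_ae h0
  rcases eq_or_lt_of_le han with he | hlt
  · have hf0 : f =ᵐ[ν] 0 := (integral_eq_zero_iff_of_nonneg_ae h0 hf).mp he.symm
    have : (fun x => Real.sqrt (f x)) =ᵐ[ν] 0 := hf0.mono fun x hx => by simp [hx]
    rw [integral_congr_ae this]
    simp [Real.sqrt_nonneg]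
  · have hsq : 0 < Real.sqrt a := Real.sqrt_pos.2 hlt
    have hpt : ∀ᵐ x ∂ν, Real.sqrt (f x) ≤ (f x + a) / (2 * Real.sqrt a) := by
      filter_upwards [h0] with x hx
      rw [le_div_iff₀ (by positivity)]
      nlinarith [Real.sq_sqrt hx, Real.sq_sqrt han, sq_nonneg (Real.sqrt (f x) - Real.sqrt a),
        Real.sqrt_nonneg (f x)]
    have hint : Integrable (fun x => (f x + a) / (2 * Real.sqrt a)) ν :=
      ((hf.add (integrable_const a)).div_const _)
    calc ∫ x, Real.sqrt (f x) ∂ν ≤ ∫ x, (f x + a) / (2 * Real.sqrt a) ∂ν :=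
          integral_mono_of_nonneg (Filter.Eventually.of_forall fun x => Real.sqrt_nonneg _) hint hpt
      _ = (a + a) / (2 * Real.sqrt a) := by
          rw [integral_div, integral_add hf (integrable_const a), integral_const]
          simp [← ha]
      _ = a / Real.sqrt a := by ring
      _ = Real.sqrt a := Real.div_sqrt

lemma mgf_one_step {α : Type*} [MeasurableSpace α] (ν : Measure α) [IsProbabilityMeasure ν]
    {W : α → ℝ} (hm : AEStronglyMeasurable W ν) {c v l : ℝ} (hl : 0 ≤ l)
    (hc : ∀ᵐ x ∂ν, |W x| ≤ c) (hlc : l * c ≤ 1)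
    (h0 : ∫ x, W x ∂ν = 0) (h2 : ∫ x, (W x) ^ 2 ∂ν ≤ v) :
    ∫ x, Real.exp (l * W x) ∂ν ≤ Real.exp (l ^ 2 * v) := by
  have hc0 : 0 ≤ c := by
    obtain ⟨x, hx⟩ := hc.exists
    exact le_trans (abs_nonneg _) hx
  have hWint : Integrable W ν :=
    Integrable.mono' (integrable_const c) hm (hc.mono fun x h => by simpa using h)
  have hW2int : Integrable (fun x => (W x) ^ 2) ν := by
    refine Integrable.mono' (integrable_const (c ^ 2)) (hm.pow 2) (hc.mono fun x h => ?_)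
    have : |W x| ^ 2 ≤ c ^ 2 := by nlinarith [abs_nonneg (W x)]
    simpa [abs_pow, sq_abs] using this
  have hbd : ∀ᵐ x ∂ν, |l * W x| ≤ 1 := by
    filter_upwards [hc] with x hx
    rw [abs_mul, abs_of_nonneg hl]
    calc l * |W x| ≤ l * c := by nlinarith
      _ ≤ 1 := hlc
  have hgint : Integrable (fun x => 1 + l * W x + (l * W x) ^ 2) ν := by
    refine ((integrable_const (1:ℝ)).add (hWint.const_mul l)).add ?_
    have : (fun x => (l * W x) ^ 2) = fun x => l ^ 2 * (W x) ^ 2 := by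
      funext x; ring
    rw [this]; exact hW2int.const_mul _
  calc ∫ x, Real.exp (l * W x) ∂ν
      ≤ ∫ x, (1 + l * W x + (l * W x) ^ 2) ∂ν := by
        refine integral_mono_of_nonneg
          (Filter.Eventually.of_forall fun x => (Real.exp_pos _).le) hgint ?_
        filter_upwards [hbd] with x hx using exp_le_quad hx
    _ = 1 + l * ∫ x, W x ∂ν + l ^ 2 * ∫ x, (W x) ^ 2 ∂ν := by
        have e1 : ∀ x, 1 + l * W x + (l * W x) ^ 2 = 1 + (l * W x + l ^ 2 * W x ^ 2) :=
          fun x => by ring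
        calc ∫ x, (1 + l * W x + (l * W x) ^ 2) ∂ν
            = ∫ x, (1 + (l * W x + l ^ 2 * W x ^ 2)) ∂ν := by
              congr 1; funext x; ring
          _ = (∫ _x, (1:ℝ) ∂ν) + ∫ x, (l * W x + l ^ 2 * W x ^ 2) ∂ν :=
              integral_add (integrable_const 1) ((hWint.const_mul l).add (hW2int.const_mul (l ^ 2)))
          _ = (∫ _x, (1:ℝ) ∂ν) + ((∫ x, l * W x ∂ν) + ∫ x, l ^ 2 * W x ^ 2 ∂ν) := by
              rw [integral_add (hWint.const_mul l) (hW2int.const_mul (l ^ 2))]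
          _ = 1 + l * ∫ x, W x ∂ν + l ^ 2 * ∫ x, (W x) ^ 2 ∂ν := by
              rw [integral_const, integral_const_mul, integral_const_mul]
              simp [measure_univ]
              ring
    _ ≤ 1 + l ^ 2 * v := by
        rw [h0]
        have := mul_le_mul_of_nonneg_left h2 (sq_nonneg l)
        linarith
    _ ≤ Real.exp (l ^ 2 * v) := by linarith [Real.add_one_le_exp (l ^ 2 * v)]

lemma indep_integral_eq {Ω E : Type*} [MeasurableSpace Ω] {μ : Measure Ω} [IsProbabilityMeasure μ]
    [MeasurableSpace E] {Y Z : Ω → E} (hY : Measurable Y) (hZ : Measurable Z)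
    (hInd : IndepFun Y Z μ) (F : E → E → ℝ)
    (hF : Integrable (fun p : E × E => F p.1 p.2) ((μ.map Y).prod (μ.map Z))) :
    ∫ ω, F (Y ω) (Z ω) ∂μ = ∫ y, ∫ z, F y z ∂(μ.map Z) ∂(μ.map Y) := by
  have h := (ProbabilityTheory.indepFun_iff_map_prod_eq_prod_map_map hY.aemeasurable
    hZ.aemeasurable).mp hInd
  rw [← MeasureTheory.integral_prod _ hF, ← h,
    MeasureTheory.integral_map (hY.prodMk hZ).aemeasurable (by rw [h]; exact hF.1)]



section Main

variable {E : Type*} [NormedAddCommGroup E] [InnerProductSpace ℝ E]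
    [FiniteDimensional ℝ E] [MeasurableSpace E] [BorelSpace E]
    {Ω : Type*} [MeasurableSpace Ω] {μ : Measure Ω} [IsProbabilityMeasure μ]
    {m : ℕ} {X : Fin m → Ω → E} {B : ℝ}

def tail (X : Fin m → Ω → E) (k : ℕ) (ω : Ω) : E :=
  ∑ i ∈ Finset.univ.filter (fun i : Fin m => k ≤ (i : ℕ)), X i ω

def head (X : Fin m → Ω → E) (k : ℕ) (ω : Ω) : E :=
  ∑ i ∈ Finset.univ.filter (fun i : Fin m => (i : ℕ) < k), X i ω

noncomputable def phi (μ : Measure Ω) (X : Fin m → Ω → E) (k : ℕ) (s : E) : ℝ :=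
  ∫ ω, ‖s + tail X k ω‖ ∂μ

lemma meas_sum (hmeas : ∀ i, Measurable (X i)) (s : Finset (Fin m)) :
    Measurable (fun ω => ∑ i ∈ s, X i ω) :=
  Finset.measurable_sum s fun i _ => hmeas i

lemma bound_sum (hB' : 0 ≤ B) (hbound : ∀ i, ∀ᵐ ω ∂μ, ‖X i ω‖ ≤ B) (s : Finset (Fin m)) :
    ∀ᵐ ω ∂μ, ‖∑ i ∈ s, X i ω‖ ≤ m * B := by
  filter_upwards [MeasureTheory.ae_all_iff.2 hbound] with ω hω
  calc ‖∑ i ∈ s, X i ω‖ ≤ ∑ i ∈ s, ‖X i ω‖ := norm_sum_le _ _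
    _ ≤ ∑ _i ∈ s, B := Finset.sum_le_sum fun i _ => hω i
    _ = s.card * B := by rw [Finset.sum_const, nsmul_eq_mul]
    _ ≤ m * B := by
        have : s.card ≤ m := by simpa using Finset.card_le_card (Finset.subset_univ s)
        have := mul_le_mul_of_nonneg_right (by exact_mod_cast this : (s.card:ℝ) ≤ m) hB'
        linarith

lemma bound_tail (hB' : 0 ≤ B) (hbound : ∀ i, ∀ᵐ ω ∂μ, ‖X i ω‖ ≤ B) (k : ℕ) :
    ∀ᵐ ω ∂μ, ‖tail X k ω‖ ≤ m * B :=
  bound_sum hB' hbound _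

lemma bound_head (hB' : 0 ≤ B) (hbound : ∀ i, ∀ᵐ ω ∂μ, ‖X i ω‖ ≤ B) (k : ℕ) :
    ∀ᵐ ω ∂μ, ‖head X k ω‖ ≤ m * B :=
  bound_sum hB' hbound _

lemma meas_tail (hmeas : ∀ i, Measurable (X i)) (k : ℕ) : Measurable (tail X k) :=
  meas_sum hmeas _

lemma meas_head (hmeas : ∀ i, Measurable (X i)) (k : ℕ) : Measurable (head X k) :=
  meas_sum hmeas _

lemma integrable_norm_tail (hmeas : ∀ i, Measurable (X i)) (hB' : 0 ≤ B)
    (hbound : ∀ i, ∀ᵐ ω ∂μ, ‖X i ω‖ ≤ B) (k : ℕ) (s : E) :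
    Integrable (fun ω => ‖s + tail X k ω‖) μ := by
  refine Integrable.mono' (integrable_const (‖s‖ + m * B))
    ((measurable_const.add (meas_tail hmeas k)).norm.aestronglyMeasurable) ?_
  filter_upwards [bound_tail hB' hbound k] with ω hω
  simp only [norm_norm]
  calc ‖s + tail X k ω‖ ≤ ‖s‖ + ‖tail X k ω‖ := norm_add_le _ _
    _ ≤ ‖s‖ + m * B := by linarith

lemma phi_sub_le (hmeas : ∀ i, Measurable (X i)) (hB' : 0 ≤ B)
    (hbound : ∀ i, ∀ᵐ ω ∂μ, ‖X i ω‖ ≤ B) (k : ℕ) (s s' : E) :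
    |phi μ X k s - phi μ X k s'| ≤ ‖s - s'‖ := by
  rw [phi, phi, ← integral_sub (integrable_norm_tail hmeas hB' hbound k s)
    (integrable_norm_tail hmeas hB' hbound k s')]
  calc |∫ ω, (‖s + tail X k ω‖ - ‖s' + tail X k ω‖) ∂μ|
      ≤ ∫ ω, |‖s + tail X k ω‖ - ‖s' + tail X k ω‖| ∂μ := by
        simpa [Real.norm_eq_abs] using
          norm_integral_le_integral_norm (fun ω => ‖s + tail X k ω‖ - ‖s' + tail X k ω‖) (μ := μ)
    _ ≤ ∫ _ω, ‖s - s'‖ ∂μ := by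
        refine integral_mono_of_nonneg (Filter.Eventually.of_forall fun ω => abs_nonneg _)
          (integrable_const _) (Filter.Eventually.of_forall fun ω => ?_)
        have := abs_norm_sub_norm_le (s + tail X k ω) (s' + tail X k ω)
        simpa [add_sub_add_right_eq_sub] using this
    _ = ‖s - s'‖ := by simp [measure_univ]

lemma phi_cont (hmeas : ∀ i, Measurable (X i)) (hB' : 0 ≤ B)
    (hbound : ∀ i, ∀ᵐ ω ∂μ, ‖X i ω‖ ≤ B) (k : ℕ) : Continuous (phi μ X k) := by
  have : LipschitzWith 1 (phi μ X k) := by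
    refine LipschitzWith.of_dist_le_mul fun s s' => ?_
    rw [Real.dist_eq, dist_eq_norm]
    simpa using phi_sub_le hmeas hB' hbound k s s'
  exact this.continuous

lemma phi_nonneg (k : ℕ) (s : E) : 0 ≤ phi μ X k s :=
  integral_nonneg fun ω => norm_nonneg _

lemma phi_bound (hB' : 0 ≤ B) (hbound : ∀ i, ∀ᵐ ω ∂μ, ‖X i ω‖ ≤ B) (k : ℕ) (s : E) :
    phi μ X k s ≤ ‖s‖ + m * B := by
  rw [phi]
  calc ∫ ω, ‖s + tail X k ω‖ ∂μ ≤ ∫ _ω, (‖s‖ + m * B) ∂μ := by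
        refine integral_mono_of_nonneg (Filter.Eventually.of_forall fun ω => norm_nonneg _)
          (integrable_const _) ?_
        filter_upwards [bound_tail hB' hbound k] with ω hω
        calc ‖s + tail X k ω‖ ≤ ‖s‖ + ‖tail X k ω‖ := norm_add_le _ _
          _ ≤ ‖s‖ + m * B := by linarith
    _ = ‖s‖ + m * B := by simp [measure_univ]

lemma head_zero (ω : Ω) : head X 0 ω = 0 := by simp [head]

lemma head_top (ω : Ω) : head X m ω = ∑ i, X i ω := by
  rw [head]
  congr 1
  exact Finset.filter_true_of_mem fun i _ => i.isLt

lemma tail_top (ω : Ω) : tail X m ω = 0 := by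
  rw [tail]
  have : Finset.univ.filter (fun i : Fin m => m ≤ (i : ℕ)) = ∅ :=
    Finset.filter_false_of_mem fun i _ => Nat.not_le.2 i.isLt
  simp [this]

lemma phi_top (s : E) : phi μ X m s = ‖s‖ := by
  rw [phi]
  simp [tail_top, measure_univ]

lemma head_succ {k : ℕ} (hk : k < m) (ω : Ω) :
    head X (k + 1) ω = head X k ω + X ⟨k, hk⟩ ω := by
  rw [head, head]
  have h1 : Finset.univ.filter (fun i : Fin m => (i : ℕ) < k + 1) =
      insert ⟨k, hk⟩ (Finset.univ.filter (fun i : Fin m => (i : ℕ) < k)) := by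
    ext i
    simp [Fin.ext_iff]
    omega
  have h2 : (⟨k, hk⟩ : Fin m) ∉ Finset.univ.filter (fun i : Fin m => (i : ℕ) < k) := by simp
  rw [h1, Finset.sum_insert h2, add_comm]

lemma tail_succ {k : ℕ} (hk : k < m) (ω : Ω) :
    tail X k ω = X ⟨k, hk⟩ ω + tail X (k + 1) ω := by
  rw [tail, tail]
  have h1 : Finset.univ.filter (fun i : Fin m => k ≤ (i : ℕ)) =
      insert ⟨k, hk⟩ (Finset.univ.filter (fun i : Fin m => k + 1 ≤ (i : ℕ))) := by
    ext i
    simp [Fin.ext_iff]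
    omega
  have h2 : (⟨k, hk⟩ : Fin m) ∉ Finset.univ.filter (fun i : Fin m => k + 1 ≤ (i : ℕ)) := by
    simp
  rw [h1, Finset.sum_insert h2]


lemma indep_head (hindep : iIndepFun X μ)
    (hmeas : ∀ i, Measurable (X i)) {k : ℕ} (hk : k < m) :
    IndepFun (head X k) (X ⟨k, hk⟩) μ := by
  have h := hindep.indepFun_finsetSum_of_notMem hmeas
    (s := Finset.univ.filter (fun i : Fin m => (i : ℕ) < k)) (i := ⟨k, hk⟩) (by simp)
  have he : (∑ j ∈ Finset.univ.filter (fun i : Fin m => (i : ℕ) < k), X j) = head X k := by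
    funext ω; simp [head, Finset.sum_apply]
  rwa [he] at h

lemma indep_tail (hindep : iIndepFun X μ)
    (hmeas : ∀ i, Measurable (X i)) {k : ℕ} (hk : k < m) :
    IndepFun (X ⟨k, hk⟩) (tail X (k + 1)) μ := by
  have h := hindep.indepFun_finsetSum_of_notMem hmeas
    (s := Finset.univ.filter (fun i : Fin m => k + 1 ≤ (i : ℕ))) (i := ⟨k, hk⟩) (by simp)
  have he : (∑ j ∈ Finset.univ.filter (fun i : Fin m => k + 1 ≤ (i : ℕ)), X j) = tail X (k + 1) := by
    funext ω; simp [tail, Finset.sum_apply]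
  rw [he] at h
  exact h.symm

lemma ae_map_norm_le {Y : Ω → E} (hY : Measurable Y) {C : ℝ} (h : ∀ᵐ ω ∂μ, ‖Y ω‖ ≤ C) :
    ∀ᵐ x ∂(μ.map Y), ‖x‖ ≤ C :=
  (MeasureTheory.ae_map_iff hY.aemeasurable
    (measurableSet_le measurable_norm measurable_const)).2 h

lemma integrable_prod_bound {ν₁ ν₂ : Measure E} [IsProbabilityMeasure ν₁] [IsProbabilityMeasure ν₂]
    {F : E × E → ℝ} (hF : Continuous F) {C₁ C₂ D : ℝ}
    (h₁ : ∀ᵐ y ∂ν₁, ‖y‖ ≤ C₁) (h₂ : ∀ᵐ z ∂ν₂, ‖z‖ ≤ C₂)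
    (hD : ∀ p : E × E, ‖p.1‖ ≤ C₁ → ‖p.2‖ ≤ C₂ → |F p| ≤ D) :
    Integrable F (ν₁.prod ν₂) := by
  refine Integrable.mono' (integrable_const D) hF.aestronglyMeasurable ?_
  have hmeasset : MeasurableSet {p : E × E | ‖p.1‖ ≤ C₁ ∧ ‖p.2‖ ≤ C₂} :=
    ((measurableSet_le (measurable_norm.comp measurable_fst) measurable_const).inter
      (measurableSet_le (measurable_norm.comp measurable_snd) measurable_const))
  have hae : ∀ᵐ p ∂ν₁.prod ν₂, ‖p.1‖ ≤ C₁ ∧ ‖p.2‖ ≤ C₂ := by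
    rw [MeasureTheory.Measure.ae_prod_iff_ae_ae hmeasset]
    filter_upwards [h₁] with y hy
    filter_upwards [h₂] with z hz
    exact ⟨hy, hz⟩
  filter_upwards [hae] with p hp
  simpa [Real.norm_eq_abs] using hD p hp.1 hp.2

lemma phi_conv (hindep : iIndepFun X μ)
    (hmeas : ∀ i, Measurable (X i)) (hB' : 0 ≤ B)
    (hbound : ∀ i, ∀ᵐ ω ∂μ, ‖X i ω‖ ≤ B) {k : ℕ} (hk : k < m) (s : E) :
    phi μ X k s = ∫ x, phi μ X (k + 1) (s + x) ∂(μ.map (X ⟨k, hk⟩)) := by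
  haveI i1 : IsProbabilityMeasure (μ.map (X ⟨k, hk⟩)) :=
    Measure.isProbabilityMeasure_map (hmeas _).aemeasurable
  haveI i2 : IsProbabilityMeasure (μ.map (tail X (k + 1))) :=
    Measure.isProbabilityMeasure_map (meas_tail hmeas _).aemeasurable
  have hFcont : Continuous (fun p : E × E => ‖s + p.1 + p.2‖) := by fun_prop
  have hint : Integrable (fun p : E × E => ‖s + p.1 + p.2‖)
      ((μ.map (X ⟨k, hk⟩)).prod (μ.map (tail X (k + 1)))) := by
    refine integrable_prod_bound (D := ‖s‖ + B + ↑m * B) hFcont (ae_map_norm_le (hmeas _) (hbound ⟨k, hk⟩))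
      (ae_map_norm_le (meas_tail hmeas _) (bound_tail hB' hbound (k + 1)))
      (fun p h1 h2 => ?_)
    rw [abs_norm]
    calc ‖s + p.1 + p.2‖ ≤ ‖s + p.1‖ + ‖p.2‖ := norm_add_le _ _
      _ ≤ (‖s‖ + ‖p.1‖) + ‖p.2‖ := by linarith [norm_add_le s p.1]
      _ ≤ ‖s‖ + B + m * B := by linarith
  have hstep := indep_integral_eq (hmeas ⟨k, hk⟩) (meas_tail hmeas (k + 1))
    (indep_tail hindep hmeas hk) (fun x u => ‖s + x + u‖) hint
  rw [phi]
  have he : ∀ ω, ‖s + tail X k ω‖ = ‖s + X ⟨k, hk⟩ ω + tail X (k + 1) ω‖ := fun ω => by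
    rw [tail_succ hk, ← add_assoc]
  simp_rw [he]
  rw [hstep]
  congr 1; funext x
  rw [phi, MeasureTheory.integral_map (meas_tail hmeas (k + 1)).aemeasurable
    (by fun_prop : Continuous (fun u : E => ‖s + x + u‖)).aestronglyMeasurable]


lemma integrable_X (hmeas : ∀ i, Measurable (X i)) (hbound : ∀ i, ∀ᵐ ω ∂μ, ‖X i ω‖ ≤ B)
    (i : Fin m) : Integrable (X i) μ :=
  Integrable.mono' (integrable_const B) (hmeas i).aestronglyMeasurable (hbound i)

lemma integral_sq_map (hmeas : ∀ i, Measurable (X i)) (hB' : 0 ≤ B)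
    (hbound : ∀ i, ∀ᵐ ω ∂μ, ‖X i ω‖ ≤ B) (hmean : ∀ i, ∫ ω, X i ω ∂μ = 0)
    (i : Fin m) (s : E) :
    ∫ x, ‖s + x‖ ^ 2 ∂(μ.map (X i)) = ‖s‖ ^ 2 + ∫ ω, ‖X i ω‖ ^ 2 ∂μ := by
  rw [MeasureTheory.integral_map (hmeas i).aemeasurable
    (by fun_prop : Continuous (fun x : E => ‖s + x‖ ^ 2)).aestronglyMeasurable]
  have he : ∀ ω, ‖s + X i ω‖ ^ 2
      = ‖s‖ ^ 2 + 2 * (inner ℝ s (X i ω) : ℝ) + ‖X i ω‖ ^ 2 := fun ω => norm_add_sq_real _ _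
  simp_rw [he]
  have hinner : Integrable (fun ω => (2:ℝ) * (inner ℝ s (X i ω) : ℝ)) μ := by
    refine Integrable.mono' (integrable_const (2 * (‖s‖ * B)))
      ((measurable_const.inner (hmeas i)).aestronglyMeasurable.const_mul 2) ?_
    filter_upwards [hbound i] with ω hω
    rw [Real.norm_eq_abs, abs_mul, abs_two]
    have h1 : |(inner ℝ s (X i ω) : ℝ)| ≤ ‖s‖ * ‖X i ω‖ := abs_real_inner_le_norm _ _
    have h2 : ‖s‖ * ‖X i ω‖ ≤ ‖s‖ * B := mul_le_mul_of_nonneg_left hω (norm_nonneg s)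
    nlinarith
  have hsq : Integrable (fun ω => ‖X i ω‖ ^ 2) μ := by
    refine Integrable.mono' (integrable_const (B ^ 2)) ?_ ?_
    · exact ((hmeas i).norm.pow_const 2).aestronglyMeasurable
    · filter_upwards [hbound i] with ω hω
      rw [Real.norm_eq_abs, abs_pow, abs_norm]
      exact pow_le_pow_left₀ (norm_nonneg _) hω 2
  have hadd : Integrable (fun ω => ‖s‖ ^ 2 + 2 * (inner ℝ s (X i ω) : ℝ)) μ :=
    (integrable_const _).add hinner
  rw [integral_add hadd hsq, integral_add (integrable_const _) hinner, integral_const,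
    integral_const_mul, integral_inner (integrable_X hmeas hbound i) s, hmean i]
  simp [measure_univ]


lemma integrable_sq_shift (hmeas : ∀ i, Measurable (X i)) (hB' : 0 ≤ B)
    (hbound : ∀ i, ∀ᵐ ω ∂μ, ‖X i ω‖ ≤ B) (i : Fin m) (s : E) :
    Integrable (fun x => ‖s + x‖ ^ 2) (μ.map (X i)) := by
  refine Integrable.mono' (integrable_const ((‖s‖ + B) ^ 2))
    ((by fun_prop : Continuous (fun x : E => ‖s + x‖ ^ 2)).aestronglyMeasurable) ?_
  filter_upwards [ae_map_norm_le (hmeas i) (hbound i)] with x hx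
  rw [Real.norm_eq_abs, abs_pow, abs_norm]
  have h1 : ‖s + x‖ ≤ ‖s‖ + B := by
    calc ‖s + x‖ ≤ ‖s‖ + ‖x‖ := norm_add_le _ _
      _ ≤ ‖s‖ + B := by linarith
  exact pow_le_pow_left₀ (norm_nonneg _) h1 2

lemma phi_le_sqrt (hindep : iIndepFun X μ)
    (hmeas : ∀ i, Measurable (X i)) (hB' : 0 ≤ B)
    (hbound : ∀ i, ∀ᵐ ω ∂μ, ‖X i ω‖ ≤ B) (hmean : ∀ i, ∫ ω, X i ω ∂μ = 0)
    {k : ℕ} (hkm : k ≤ m) : ∀ s : E, phi μ X k s ≤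
      Real.sqrt (‖s‖ ^ 2 +
        ∑ i ∈ Finset.univ.filter (fun i : Fin m => k ≤ (i : ℕ)), ∫ ω, ‖X i ω‖ ^ 2 ∂μ) := by
  induction hkm using Nat.decreasingInduction with
  | self =>
      intro s
      have h : Finset.univ.filter (fun i : Fin m => m ≤ (i : ℕ)) = ∅ :=
        Finset.filter_false_of_mem fun i _ => Nat.not_le.2 i.isLt
      rw [phi_top, h]
      simp [Real.sqrt_sq (norm_nonneg s)]
  | of_succ k hk IH =>
      intro s
      haveI : IsProbabilityMeasure (μ.map (X ⟨k, hk⟩)) :=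
        Measure.isProbabilityMeasure_map (hmeas _).aemeasurable
      set ν := μ.map (X ⟨k, hk⟩) with hν
      set R : ℝ := ∑ i ∈ Finset.univ.filter (fun i : Fin m => k + 1 ≤ (i : ℕ)),
        ∫ ω, ‖X i ω‖ ^ 2 ∂μ with hR
      have hR0 : 0 ≤ R := Finset.sum_nonneg fun i _ =>
        integral_nonneg fun ω => by positivity
      have hsum : (∑ i ∈ Finset.univ.filter (fun i : Fin m => k ≤ (i : ℕ)),
          ∫ ω, ‖X i ω‖ ^ 2 ∂μ) = (∫ ω, ‖X ⟨k, hk⟩ ω‖ ^ 2 ∂μ) + R := by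
        rw [hR]
        have h1 : Finset.univ.filter (fun i : Fin m => k ≤ (i : ℕ)) =
            insert ⟨k, hk⟩ (Finset.univ.filter (fun i : Fin m => k + 1 ≤ (i : ℕ))) := by
          ext i
          simp [Fin.ext_iff]
          omega
        rw [h1, Finset.sum_insert (by simp)]
      have hintsq : Integrable (fun x => ‖s + x‖ ^ 2 + R) ν :=
        (integrable_sq_shift hmeas hB' hbound _ s).add (integrable_const R)
      calc phi μ X k s = ∫ x, phi μ X (k + 1) (s + x) ∂ν :=
            phi_conv hindep hmeas hB' hbound hk s
        _ ≤ ∫ x, Real.sqrt (‖s + x‖ ^ 2 + R) ∂ν := by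
            refine integral_mono_of_nonneg
              (Filter.Eventually.of_forall fun x => phi_nonneg _ _) ?_
              (Filter.Eventually.of_forall fun x => IH (s + x))
            refine Integrable.mono' (integrable_const (Real.sqrt ((‖s‖ + B) ^ 2 + R)))
              ((by fun_prop : Continuous fun x : E =>
                Real.sqrt (‖s + x‖ ^ 2 + R)).aestronglyMeasurable) ?_
            filter_upwards [ae_map_norm_le (hmeas _) (hbound ⟨k, hk⟩)] with x hx
            rw [Real.norm_eq_abs, abs_of_nonneg (Real.sqrt_nonneg _)]
            refine Real.sqrt_le_sqrt ?_
            have h1 : ‖s + x‖ ≤ ‖s‖ + B := by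
              calc ‖s + x‖ ≤ ‖s‖ + ‖x‖ := norm_add_le _ _
                _ ≤ ‖s‖ + B := by linarith
            nlinarith [norm_nonneg (s + x), norm_nonneg s]
        _ ≤ Real.sqrt (∫ x, (‖s + x‖ ^ 2 + R) ∂ν) :=
            integral_sqrt_le ν hintsq (Filter.Eventually.of_forall fun x => by positivity)
        _ = Real.sqrt (‖s‖ ^ 2 + ((∫ ω, ‖X ⟨k, hk⟩ ω‖ ^ 2 ∂μ) + R)) := by
            rw [integral_add (integrable_sq_shift hmeas hB' hbound _ s) (integrable_const R),
              integral_sq_map hmeas hB' hbound hmean, integral_const]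
            simp [measure_univ]
            ring_nf
        _ = _ := by rw [hsum]


lemma integrable_phi_shift (hmeas : ∀ i, Measurable (X i)) (hB' : 0 ≤ B)
    (hbound : ∀ i, ∀ᵐ ω ∂μ, ‖X i ω‖ ≤ B) (j : ℕ) (i : Fin m) (y : E) :
    Integrable (fun x => phi μ X j (y + x)) (μ.map (X i)) := by
  refine Integrable.mono' (integrable_const (‖y‖ + B + m * B))
    (((phi_cont hmeas hB' hbound j).comp
      (continuous_const.add continuous_id)).aestronglyMeasurable) ?_
  filter_upwards [ae_map_norm_le (hmeas i) (hbound i)] with x hx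
  rw [Real.norm_eq_abs, abs_of_nonneg (phi_nonneg _ _)]
  calc phi μ X j (y + x) ≤ ‖y + x‖ + m * B := phi_bound hB' hbound j _
    _ ≤ ‖y‖ + B + m * B := by have := norm_add_le y x; linarith

lemma integral_normsq_map (hmeas : ∀ i, Measurable (X i)) (i : Fin m) :
    ∫ x, ‖x‖ ^ 2 ∂(μ.map (X i)) = ∫ ω, ‖X i ω‖ ^ 2 ∂μ :=
  MeasureTheory.integral_map (hmeas i).aemeasurable
    (by fun_prop : Continuous (fun x : E => ‖x‖ ^ 2)).aestronglyMeasurable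

lemma integrable_normsq_map (hmeas : ∀ i, Measurable (X i)) (hB' : 0 ≤ B)
    (hbound : ∀ i, ∀ᵐ ω ∂μ, ‖X i ω‖ ≤ B) (i : Fin m) :
    Integrable (fun x : E => ‖x‖ ^ 2) (μ.map (X i)) := by
  refine Integrable.mono' (integrable_const (B ^ 2))
    ((by fun_prop : Continuous (fun x : E => ‖x‖ ^ 2)).aestronglyMeasurable) ?_
  filter_upwards [ae_map_norm_le (hmeas i) (hbound i)] with x hx
  rw [Real.norm_eq_abs, abs_pow, abs_norm]
  exact pow_le_pow_left₀ (norm_nonneg _) hx 2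

lemma mgf_inner (hindep : iIndepFun X μ)
    (hmeas : ∀ i, Measurable (X i)) (hB' : 0 ≤ B)
    (hbound : ∀ i, ∀ᵐ ω ∂μ, ‖X i ω‖ ≤ B)
    {l : ℝ} (hl : 0 ≤ l) (hlB : l * (2 * B) ≤ 1)
    {k : ℕ} (hk : k < m) (y : E) :
    ∫ x, Real.exp (l * phi μ X (k + 1) (y + x)) ∂(μ.map (X ⟨k, hk⟩)) ≤
      Real.exp (l * phi μ X k y) * Real.exp (l ^ 2 * ∫ ω, ‖X ⟨k, hk⟩ ω‖ ^ 2 ∂μ) := by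
  haveI : IsProbabilityMeasure (μ.map (X ⟨k, hk⟩)) :=
    Measure.isProbabilityMeasure_map (hmeas _).aemeasurable
  set ν := μ.map (X ⟨k, hk⟩) with hν
  have hconv := phi_conv hindep hmeas hB' hbound hk y
  have hint1 : Integrable (fun x => phi μ X (k + 1) (y + x)) ν :=
    integrable_phi_shift hmeas hB' hbound (k + 1) _ y
  set W : E → ℝ := fun x => phi μ X (k + 1) (y + x) - phi μ X k y with hWdef
  have hWm : AEStronglyMeasurable W ν := by
    refine Continuous.aestronglyMeasurable ?_
    exact ((phi_cont hmeas hB' hbound (k + 1)).comp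
      (continuous_const.add continuous_id)).sub continuous_const
  have hW0 : ∫ x, W x ∂ν = 0 := by
    simp only [hWdef]
    rw [integral_sub hint1 (integrable_const _), integral_const, ← hconv]
    simp [measure_univ]
  have hsecond : |phi μ X (k + 1) y - phi μ X k y| ≤ B := by
    have he : phi μ X (k + 1) y - phi μ X k y
        = ∫ x, (phi μ X (k + 1) y - phi μ X (k + 1) (y + x)) ∂ν := by
      rw [integral_sub (integrable_const _) hint1, integral_const, ← hconv]
      simp [measure_univ]
    rw [he]
    calc |∫ x, (phi μ X (k + 1) y - phi μ X (k + 1) (y + x)) ∂ν|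
        ≤ ∫ x, |phi μ X (k + 1) y - phi μ X (k + 1) (y + x)| ∂ν := by
          simpa [Real.norm_eq_abs] using norm_integral_le_integral_norm
            (fun x => phi μ X (k + 1) y - phi μ X (k + 1) (y + x)) (μ := ν)
      _ ≤ ∫ _x, B ∂ν := by
          refine integral_mono_of_nonneg (Filter.Eventually.of_forall fun x => abs_nonneg _)
            (integrable_const _) ?_
          filter_upwards [ae_map_norm_le (hmeas _) (hbound ⟨k, hk⟩)] with x hx
          have h1 := phi_sub_le hmeas hB' hbound (k + 1) y (y + x)
          have h2 : ‖y - (y + x)‖ = ‖x‖ := by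
            rw [show y - (y + x) = -x by abel, norm_neg]
          rw [h2] at h1
          linarith
      _ = B := by simp [measure_univ]
  have hfirst : ∀ x : E, |phi μ X (k + 1) (y + x) - phi μ X (k + 1) y| ≤ ‖x‖ := by
    intro x
    have h1 := phi_sub_le hmeas hB' hbound (k + 1) (y + x) y
    rwa [add_sub_cancel_left] at h1
  have hWc : ∀ᵐ x ∂ν, |W x| ≤ 2 * B := by
    filter_upwards [ae_map_norm_le (hmeas _) (hbound ⟨k, hk⟩)] with x hx
    have he : W x = (phi μ X (k + 1) (y + x) - phi μ X (k + 1) y)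
        + (phi μ X (k + 1) y - phi μ X k y) := by simp only [hWdef]; ring
    calc |W x| ≤ |phi μ X (k + 1) (y + x) - phi μ X (k + 1) y|
          + |phi μ X (k + 1) y - phi μ X k y| := by rw [he]; exact abs_add_le _ _
      _ ≤ ‖x‖ + B := add_le_add (hfirst x) hsecond
      _ ≤ 2 * B := by linarith
  -- variance bound
  set g : E → ℝ := fun x => phi μ X (k + 1) (y + x) - phi μ X (k + 1) y with hgdef
  have hgabs : ∀ x, |g x| ≤ ‖x‖ := hfirst
  have hgint : Integrable g ν := hint1.sub (integrable_const _)
  have hg2int : Integrable (fun x => g x ^ 2) ν := by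
    refine Integrable.mono' (integrable_normsq_map hmeas hB' hbound _) ?_
      (Filter.Eventually.of_forall fun x => ?_)
    · refine Continuous.aestronglyMeasurable ?_
      exact (((phi_cont hmeas hB' hbound (k + 1)).comp
        (continuous_const.add continuous_id)).sub continuous_const).pow 2
    · rw [Real.norm_eq_abs, abs_pow, sq_abs]
      calc g x ^ 2 = |g x| ^ 2 := (sq_abs _).symm
        _ ≤ ‖x‖ ^ 2 := pow_le_pow_left₀ (abs_nonneg _) (hgabs x) 2
  have hgval : ∫ x, g x ∂ν = phi μ X k y - phi μ X (k + 1) y := by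
    simp only [hgdef]
    rw [integral_sub hint1 (integrable_const _), integral_const, ← hconv]
    simp [measure_univ]
  have hW2 : ∫ x, W x ^ 2 ∂ν ≤ ∫ ω, ‖X ⟨k, hk⟩ ω‖ ^ 2 ∂μ := by
    set c : ℝ := phi μ X k y - phi μ X (k + 1) y with hcdef
    have he : ∀ x, W x ^ 2 = g x ^ 2 - (2 * c) * g x + c ^ 2 := by
      intro x; simp only [hWdef, hgdef, hcdef]; ring
    have h1 : ∫ x, W x ^ 2 ∂ν = (∫ x, g x ^ 2 ∂ν) - c ^ 2 := by
      simp_rw [he]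
      have ha : Integrable (fun x => g x ^ 2 - (2 * c) * g x) ν :=
        hg2int.sub (hgint.const_mul _)
      rw [integral_add ha (integrable_const _),
        integral_sub hg2int (hgint.const_mul _), integral_const, integral_const_mul, hgval]
      simp [measure_univ]
      ring
    rw [h1, ← integral_normsq_map hmeas]
    have h2 : ∫ x, g x ^ 2 ∂ν ≤ ∫ x, ‖x‖ ^ 2 ∂ν := by
      refine integral_mono_of_nonneg (Filter.Eventually.of_forall fun x => sq_nonneg _)
        (integrable_normsq_map hmeas hB' hbound _)
        (Filter.Eventually.of_forall fun x => ?_)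
      calc g x ^ 2 = |g x| ^ 2 := (sq_abs _).symm
        _ ≤ ‖x‖ ^ 2 := pow_le_pow_left₀ (abs_nonneg _) (hgabs x) 2
    nlinarith [sq_nonneg c]
  have hmgf := mgf_one_step ν hWm hl hWc hlB hW0 hW2
  have hee : ∀ x, Real.exp (l * phi μ X (k + 1) (y + x))
      = Real.exp (l * phi μ X k y) * Real.exp (l * W x) := by
    intro x
    rw [← Real.exp_add]
    congr 1
    simp only [hWdef]
    ring
  calc ∫ x, Real.exp (l * phi μ X (k + 1) (y + x)) ∂ν
      = ∫ x, Real.exp (l * phi μ X k y) * Real.exp (l * W x) ∂ν := by simp_rw [hee]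
    _ = Real.exp (l * phi μ X k y) * ∫ x, Real.exp (l * W x) ∂ν := integral_const_mul _ _
    _ ≤ Real.exp (l * phi μ X k y) * Real.exp (l ^ 2 * ∫ ω, ‖X ⟨k, hk⟩ ω‖ ^ 2 ∂μ) :=
        mul_le_mul_of_nonneg_left hmgf (Real.exp_pos _).le


lemma mgf_main (hindep : iIndepFun X μ)
    (hmeas : ∀ i, Measurable (X i)) (hB' : 0 ≤ B)
    (hbound : ∀ i, ∀ᵐ ω ∂μ, ‖X i ω‖ ≤ B)
    {l : ℝ} (hl : 0 ≤ l) (hlB : l * (2 * B) ≤ 1) :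
    ∀ {k : ℕ}, k ≤ m →
    ∫ ω, Real.exp (l * phi μ X k (head X k ω)) ∂μ ≤
      Real.exp (l * phi μ X 0 0 + l ^ 2 *
        ∑ i ∈ Finset.univ.filter (fun i : Fin m => (i : ℕ) < k), ∫ ω, ‖X i ω‖ ^ 2 ∂μ) := by
  intro k
  induction k with
  | zero =>
      intro _
      have h : Finset.univ.filter (fun i : Fin m => (i : ℕ) < 0) = ∅ :=
        Finset.filter_false_of_mem fun i _ => Nat.not_lt_zero _
      simp [head_zero, h, integral_const, measure_univ]
  | succ k IH =>
      intro hk1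
      have hk : k < m := hk1
      specialize IH hk.le
      haveI : IsProbabilityMeasure (μ.map (X ⟨k, hk⟩)) :=
        Measure.isProbabilityMeasure_map (hmeas _).aemeasurable
      haveI : IsProbabilityMeasure (μ.map (head X k)) :=
        Measure.isProbabilityMeasure_map (meas_head hmeas k).aemeasurable
      set σk : ℝ := ∫ ω, ‖X ⟨k, hk⟩ ω‖ ^ 2 ∂μ with hσk
      have hphicont : Continuous (phi μ X k) := phi_cont hmeas hB' hbound k
      have he1 : ∀ ω, phi μ X (k + 1) (head X (k + 1) ω)
          = phi μ X (k + 1) (head X k ω + X ⟨k, hk⟩ ω) := fun ω => by rw [head_succ hk]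
      have hFcont : Continuous (fun p : E × E => Real.exp (l * phi μ X (k + 1) (p.1 + p.2))) := by
        refine Real.continuous_exp.comp (continuous_const.mul ?_)
        exact (phi_cont hmeas hB' hbound (k + 1)).comp (continuous_fst.add continuous_snd)
      calc ∫ ω, Real.exp (l * phi μ X (k + 1) (head X (k + 1) ω)) ∂μ
          = ∫ ω, Real.exp (l * phi μ X (k + 1) (head X k ω + X ⟨k, hk⟩ ω)) ∂μ := by
            simp_rw [he1]
        _ = ∫ y, ∫ x, Real.exp (l * phi μ X (k + 1) (y + x))
              ∂(μ.map (X ⟨k, hk⟩)) ∂(μ.map (head X k)) := by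
            refine indep_integral_eq (meas_head hmeas k) (hmeas _)
              (indep_head hindep hmeas hk)
              (fun y x => Real.exp (l * phi μ X (k + 1) (y + x))) ?_
            refine integrable_prod_bound (D := Real.exp (l * (m * B + B + m * B))) hFcont
              (ae_map_norm_le (meas_head hmeas k) (bound_head hB' hbound k))
              (ae_map_norm_le (hmeas _) (hbound ⟨k, hk⟩)) (fun p h1 h2 => ?_)
            rw [abs_of_nonneg (Real.exp_pos _).le]
            refine Real.exp_le_exp.2 (mul_le_mul_of_nonneg_left ?_ hl)
            calc phi μ X (k + 1) (p.1 + p.2) ≤ ‖p.1 + p.2‖ + m * B :=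
                  phi_bound hB' hbound _ _
              _ ≤ m * B + B + m * B := by have := norm_add_le p.1 p.2; linarith
        _ ≤ ∫ y, Real.exp (l * phi μ X k y) * Real.exp (l ^ 2 * σk) ∂(μ.map (head X k)) := by
            refine integral_mono_of_nonneg
              (Filter.Eventually.of_forall fun y =>
                integral_nonneg fun x => (Real.exp_pos _).le) ?_
              (Filter.Eventually.of_forall fun y =>
                mgf_inner hindep hmeas hB' hbound hl hlB hk y)
            refine Integrable.mono'
              (integrable_const (Real.exp (l * (m * B + m * B)) * Real.exp (l ^ 2 * σk)))
              (((Real.continuous_exp.comp (continuous_const.mul hphicont)).mul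
                continuous_const).aestronglyMeasurable) ?_
            filter_upwards [ae_map_norm_le (meas_head hmeas k) (bound_head hB' hbound k)]
              with y hy
            rw [Real.norm_eq_abs, abs_of_nonneg (by positivity)]
            refine mul_le_mul_of_nonneg_right ?_ (Real.exp_pos _).le
            refine Real.exp_le_exp.2 (mul_le_mul_of_nonneg_left ?_ hl)
            calc phi μ X k y ≤ ‖y‖ + m * B := phi_bound hB' hbound _ _
              _ ≤ m * B + m * B := by linarith
        _ = Real.exp (l ^ 2 * σk) * ∫ ω, Real.exp (l * phi μ X k (head X k ω)) ∂μ := by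
            have he2 : ∀ y : E, Real.exp (l * phi μ X k y) * Real.exp (l ^ 2 * σk)
                = Real.exp (l ^ 2 * σk) * Real.exp (l * phi μ X k y) := fun y => mul_comm _ _
            simp_rw [he2]
            have hc3 : Continuous (fun y : E => Real.exp (l * phi μ X k y)) :=
              Real.continuous_exp.comp (continuous_const.mul hphicont)
            rw [integral_const_mul, MeasureTheory.integral_map (meas_head hmeas k).aemeasurable
              hc3.aestronglyMeasurable]
        _ ≤ Real.exp (l ^ 2 * σk) * Real.exp (l * phi μ X 0 0 + l ^ 2 *
              ∑ i ∈ Finset.univ.filter (fun i : Fin m => (i : ℕ) < k), ∫ ω, ‖X i ω‖ ^ 2 ∂μ) :=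
            mul_le_mul_of_nonneg_left IH (Real.exp_pos _).le
        _ = _ := by
            rw [← Real.exp_add]
            congr 1
            have h1 : Finset.univ.filter (fun i : Fin m => (i : ℕ) < k + 1) =
                insert ⟨k, hk⟩ (Finset.univ.filter (fun i : Fin m => (i : ℕ) < k)) := by
              ext i
              simp [Fin.ext_iff]
              omega
            rw [h1, Finset.sum_insert (by simp), ← hσk]
            ring

end Main
end VB





open VB in
/-- **Vector Bernstein inequality.**  Let `X₁,…,X_m` be independent zero-mean random
vectors in a finite-dimensional inner product space, `V = ∑ᵢ E[‖Xᵢ‖²]`,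
`N = ‖∑ᵢ Xᵢ‖`.  Then for `0 < t ≤ V/(max ‖Xᵢ‖)`,
`Pr[N ≥ √V + t] ≤ exp(−t²/(4V))`. -/
theorem vector_bernstein {E : Type*} [NormedAddCommGroup E] [InnerProductSpace ℝ E]
    [FiniteDimensional ℝ E] [MeasurableSpace E] [BorelSpace E]
    {Ω : Type*} [MeasurableSpace Ω] (μ : Measure Ω) [IsProbabilityMeasure μ]
    {m : ℕ} (X : Fin m → Ω → E)
    (hmeas : ∀ i, Measurable (X i))
    (hindep : iIndepFun X μ)
    (hmean : ∀ i, ∫ ω, X i ω ∂μ = 0)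
    (B : ℝ) (hB : 0 < B) (hbound : ∀ i, ∀ᵐ ω ∂μ, ‖X i ω‖ ≤ B)
    (V : ℝ) (hV : V = ∑ i, ∫ ω, ‖X i ω‖ ^ 2 ∂μ)
    (t : ℝ) (ht : 0 < t) (ht2 : t ≤ V / B) :
    μ {ω | Real.sqrt V + t ≤ ‖∑ i, X i ω‖} ≤
      ENNReal.ofReal (Real.exp (-(t ^ 2) / (4 * V))) := by
  have hB' : 0 ≤ B := hB.le
  have hV0 : 0 < V := by
    have h := lt_of_lt_of_le ht ht2
    rw [lt_div_iff₀ hB] at h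
    simpa using h
  set l : ℝ := t / (2 * V) with hldef
  have hlpos : 0 < l := div_pos ht (by linarith)
  have htB : t * B ≤ V := (le_div_iff₀ hB).mp ht2
  have hlB : l * (2 * B) ≤ 1 := by
    have he : l * (2 * B) = (t * B) / V := by
      rw [hldef]; field_simp
    rw [he]
    exact (div_le_one hV0).2 htB
  have hmgf := mgf_main hindep hmeas hB' hbound hlpos.le hlB (le_refl m)
  have huniv : Finset.univ.filter (fun i : Fin m => (i : ℕ) < m) = Finset.univ :=
    Finset.filter_true_of_mem fun i _ => i.isLt
  rw [huniv, ← hV] at hmgf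
  have hN : ∀ ω, phi μ X m (head X m ω) = ‖∑ i, X i ω‖ := fun ω => by
    rw [head_top, phi_top]
  simp only [hN] at hmgf
  have hEN : phi μ X 0 0 ≤ Real.sqrt V := by
    have h := phi_le_sqrt hindep hmeas hB' hbound hmean (Nat.zero_le m) 0
    have h0 : Finset.univ.filter (fun i : Fin m => 0 ≤ (i : ℕ)) = Finset.univ :=
      Finset.filter_true_of_mem fun i _ => Nat.zero_le _
    rw [h0] at h
    simpa [hV] using h
  have hNmeas : Measurable (fun ω => ‖∑ i, X i ω‖) := (meas_sum hmeas Finset.univ).norm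
  have hNbound : ∀ᵐ ω ∂μ, ‖∑ i, X i ω‖ ≤ m * B := bound_sum hB' hbound Finset.univ
  have hint : Integrable (fun ω => Real.exp (l * ‖∑ i, X i ω‖)) μ := by
    refine Integrable.mono' (integrable_const (Real.exp (l * (m * B))))
      (Real.measurable_exp.comp (hNmeas.const_mul l)).aestronglyMeasurable ?_
    filter_upwards [hNbound] with ω hω
    rw [Real.norm_eq_abs, abs_of_nonneg (Real.exp_pos _).le]
    exact Real.exp_le_exp.2 (mul_le_mul_of_nonneg_left hω hlpos.le)
  have hmarkov := mul_meas_ge_le_integral_of_nonneg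
    (f := fun ω => Real.exp (l * ‖∑ i, X i ω‖))
    (Filter.Eventually.of_forall fun ω => (Real.exp_pos _).le) hint
    (Real.exp (l * (Real.sqrt V + t)))
  have hset : {ω | Real.sqrt V + t ≤ ‖∑ i, X i ω‖}
      = {ω | Real.exp (l * (Real.sqrt V + t)) ≤ Real.exp (l * ‖∑ i, X i ω‖)} := by
    ext ω
    simp only [Set.mem_setOf_eq, Real.exp_le_exp]
    exact (mul_le_mul_iff_of_pos_left hlpos).symm
  rw [hset]
  set S := {ω | Real.exp (l * (Real.sqrt V + t)) ≤ Real.exp (l * ‖∑ i, X i ω‖)} with hSdef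
  have hfin : μ S ≠ ⊤ := measure_ne_top μ _
  have harith : l ^ 2 * V - l * t = -(t ^ 2) / (4 * V) := by
    rw [hldef]; field_simp; ring
  have h2 : (μ S).toReal ≤ Real.exp (-(t ^ 2) / (4 * V)) := by
    have hε : (0 : ℝ) < Real.exp (l * (Real.sqrt V + t)) := Real.exp_pos _
    have h3 : (μ S).toReal ≤ Real.exp (l * phi μ X 0 0 + l ^ 2 * V)
        / Real.exp (l * (Real.sqrt V + t)) := by
      rw [le_div_iff₀ hε]
      calc (μ S).toReal * Real.exp (l * (Real.sqrt V + t))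
          = Real.exp (l * (Real.sqrt V + t)) * (μ S).toReal := mul_comm _ _
        _ ≤ ∫ ω, Real.exp (l * ‖∑ i, X i ω‖) ∂μ := hmarkov
        _ ≤ Real.exp (l * phi μ X 0 0 + l ^ 2 * V) := hmgf
    refine h3.trans ?_
    rw [← Real.exp_sub]
    refine Real.exp_le_exp.2 ?_
    have h4 : l * phi μ X 0 0 ≤ l * Real.sqrt V := mul_le_mul_of_nonneg_left hEN hlpos.le
    have h5 : l * (Real.sqrt V + t) = l * Real.sqrt V + l * t := by ring
    linarith [harith]
  calc μ S = ENNReal.ofReal ((μ S).toReal) := (ENNReal.ofReal_toReal hfin).symm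
    _ ≤ ENNReal.ofReal (Real.exp (-(t ^ 2) / (4 * V))) := ENNReal.ofReal_le_ofReal h2
end

section
/- Lower bound for Pauli-basis matrix recovery: Let n = 2^k and let {w_a}_{a=1}^{n²} be the (normalized) Pauli basis on ℂ^n. If Ω ⊆ [1,n²] has |Ω| < (n−2)·log₂ n, then there exist two rank-one orthogonal projections P₁, P₂ with orthogonal ranges (P₁P₂ = 0) such that tr(w_a P₁) = tr(w_a P₂) for all a ∈ Ω. -/
open Matrix

/-- The Pauli matrix `σ₁`. -/
def pauliX : Matrix (Fin 2) (Fin 2) ℂ := !![0, 1; 1, 0]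

/-- The Pauli matrix `σ₃`. -/
def pauliZ : Matrix (Fin 2) (Fin 2) ℂ := !![1, 0; 0, -1]

/-- The single-qubit Pauli operator `i^{pq} σ₃^p σ₁^q`. -/
noncomputable def pauliFactor (p q : ZMod 2) : Matrix (Fin 2) (Fin 2) ℂ :=
  (Complex.I ^ (p.val * q.val)) • (pauliZ ^ p.val * pauliX ^ q.val)

/-- The Pauli operator `w(p,q) = ⊗_j i^{p_j q_j} σ₃^{p_j} σ₁^{q_j}` on `(ℂ²)^{⊗k}`,
realized as a matrix indexed by `Fin k → Fin 2`. -/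
noncomputable def pauli {k : ℕ} (p q : Fin k → ZMod 2) :
    Matrix (Fin k → Fin 2) (Fin k → Fin 2) ℂ :=
  Matrix.of fun x y => ∏ j, pauliFactor (p j) (q j) (x j) (y j)

namespace PauliAux

noncomputable def m2 : ZMod 2 → ℂ := fun b => (-1) ^ b.val
noncomputable def zi : ZMod 4 → ℂ := fun z => Complex.I ^ z.val

def tz : Fin 2 → ZMod 2 := fun x => (x.val : ZMod 2)

lemma zmod2_cases : ∀ r : ZMod 2, r = 0 ∨ r = 1 := by decide

lemma val0 : ZMod.val (0 : ZMod 2) = 0 := rfl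
lemma val1 : ZMod.val (1 : ZMod 2) = 1 := rfl

lemma pauliFactor_apply (p q : ZMod 2) (x y : Fin 2) :
    pauliFactor p q x y =
      Complex.I ^ (p.val * q.val) * ((-1 : ℂ) ^ (p.val * x.val) *
        (if tz x = tz y + q then 1 else 0)) := by
  rcases zmod2_cases p with hp | hp <;> rcases zmod2_cases q with hq | hq <;>
    subst hp <;> subst hq <;> fin_cases x <;> fin_cases y <;>
    simp only [pauliFactor, pauliX, pauliZ, tz, Matrix.smul_apply, Matrix.mul_apply,
      Fin.sum_univ_two, val0, val1, pow_zero, pow_one, Matrix.one_apply,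
      Fin.isValue, Matrix.cons_val', Matrix.cons_val_zero, Matrix.cons_val_one,
      Matrix.head_cons, Matrix.head_fin_const, Matrix.empty_val',
      Matrix.cons_val_fin_one, Nat.cast_ofNat, Nat.cast_zero, Nat.cast_one,
      mul_zero, mul_one, zero_mul, one_mul, smul_eq_mul] <;>
    norm_num [show (2:ZMod 2) = 0 from by decide, show (1:ZMod 2) ≠ 0 from by decide,
      show (0:ZMod 2) ≠ 1 from by decide, show (1+1:ZMod 2) = 0 from rfl] <;>
    first
      | rw [if_pos (by decide)]
      | rw [if_neg (by decide)]
      | decide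

open Complex in
lemma conj_I_pow (n : ℕ) : (starRingEnd ℂ) (Complex.I ^ n) = (-Complex.I) ^ n := by
  rw [map_pow, Complex.conj_I]

lemma zi_natCast (n : ℕ) : zi (n : ZMod 4) = Complex.I ^ n := by
  have h4 : Complex.I ^ (4 : ℕ) = 1 := by
    norm_num [pow_succ, Complex.I_sq]
  conv_rhs => rw [show n = 4 * (n / 4) + n % 4 from by omega]
  rw [pow_add, pow_mul, h4, one_pow, one_mul, zi, ZMod.val_natCast]

lemma m2_natCast (n : ℕ) : m2 (n : ZMod 2) = (-1 : ℂ) ^ n := by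
  have h2 : (-1 : ℂ) ^ (2 : ℕ) = 1 := by norm_num
  conv_rhs => rw [show n = 2 * (n / 2) + n % 2 from by omega]
  rw [pow_add, pow_mul, h2, one_pow, one_mul, m2, ZMod.val_natCast]

lemma m2_add (a b : ZMod 2) : m2 (a + b) = m2 a * m2 b := by
  rcases zmod2_cases a with h | h <;> rcases zmod2_cases b with h' | h' <;>
    subst h <;> subst h' <;>
    norm_num [m2, val0, val1, show ZMod.val (2:ZMod 2) = 0 from by decide,
      show (1+1:ZMod 2) = 0 from rfl]

lemma m2_zero : m2 0 = 1 := by norm_num [m2, val0]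

lemma m2_mul_self (a : ZMod 2) : m2 a * m2 a = 1 := by
  rcases zmod2_cases a with h | h <;> subst h <;> norm_num [m2, val0, val1]

lemma conj_m2 (a : ZMod 2) : (starRingEnd ℂ) (m2 a) = m2 a := by
  simp [m2]

lemma zi_add (a b : ZMod 4) : zi (a + b) = zi a * zi b := by
  have h : ∀ x : ZMod 4, x = ((x.val : ℕ) : ZMod 4) := by decide
  conv_lhs => rw [h a, h b, ← Nat.cast_add, zi_natCast]
  conv_rhs => rw [h a, h b, zi_natCast, zi_natCast]
  rw [pow_add]

lemma conj_zi (a : ZMod 4) : (starRingEnd ℂ) (zi a) = zi (-a) := by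
  have key : zi a * zi (-a) = 1 := by
    rw [← zi_add, add_neg_cancel]
    norm_num [zi, show ZMod.val (0 : ZMod 4) = 0 from rfl]
  have habs : zi a * (starRingEnd ℂ) (zi a) = 1 := by
    rw [zi, conj_I_pow, ← mul_pow]
    norm_num [mul_comm]
  have hne : zi a ≠ 0 := by
    intro h; rw [h, zero_mul] at key; exact zero_ne_one key
  rw [← key] at habs
  exact (mul_left_cancel₀ hne habs.symm).symm

def zt : ZMod 2 → Fin 2 := fun b => ⟨b.val, by
  rcases zmod2_cases b with h | h <;> subst h <;> simp [val0, val1]⟩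

def tzEquiv : Fin 2 ≃ ZMod 2 where
  toFun := tz
  invFun := zt
  left_inv := by decide
  right_inv := by decide

variable {k : ℕ}

def T : (Fin k → Fin 2) ≃ (Fin k → ZMod 2) := Equiv.piCongrRight fun _ => tzEquiv

lemma T_apply (x : Fin k → Fin 2) (j : Fin k) : T x j = tz (x j) := rfl

lemma pauli_apply (p q : Fin k → ZMod 2) (x y : Fin k → Fin 2) :
    pauli p q x y =
      Complex.I ^ (∑ j, (p j).val * (q j).val) *
        ((-1 : ℂ) ^ (∑ j, (p j).val * (x j).val) *
          (if T x = T y + q then 1 else 0)) := by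
  have : pauli p q x y = ∏ j, pauliFactor (p j) (q j) (x j) (y j) := rfl
  rw [this]
  have : ∀ j : Fin k, pauliFactor (p j) (q j) (x j) (y j) =
      Complex.I ^ ((p j).val * (q j).val) * ((-1 : ℂ) ^ ((p j).val * (x j).val) *
        (if tz (x j) = tz (y j) + q j then 1 else 0)) := fun j => pauliFactor_apply _ _ _ _
  rw [Finset.prod_congr rfl (fun j _ => this j)]
  rw [Finset.prod_mul_distrib, Finset.prod_mul_distrib, Finset.prod_pow_eq_pow_sum,
    Finset.prod_pow_eq_pow_sum, Finset.prod_boole]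
  congr 2
  have key : (T x = T y + q) ↔ (∀ j, tz (x j) = tz (y j) + q j) := by
    constructor
    · intro h j
      have := congrFun h j
      simpa [T_apply] using this
    · intro h
      funext j
      simpa [T_apply] using h j
  simp only [Finset.mem_univ, true_implies, forall_true_left, key]

lemma sum_m2_dot (w : Fin k → ZMod 2) :
    ∑ y : Fin k → ZMod 2, m2 (w ⬝ᵥ y) = if w = 0 then ((2 : ℂ) ^ k) else 0 := by
  split_ifs with h
  · subst h
    simp [zero_dotProduct, m2_zero, Finset.card_univ, Fintype.card_fun]
  · obtain ⟨j, hj⟩ : ∃ j, w j ≠ 0 := by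
      by_contra hc
      push_neg at hc
      exact h (funext hc)
    have hwj : w j = 1 := by
      rcases zmod2_cases (w j) with h' | h'
      · exact absurd h' hj
      · exact h'
    have key : ∀ y : Fin k → ZMod 2,
        m2 (w ⬝ᵥ (y + Pi.single j 1)) = - m2 (w ⬝ᵥ y) := by
      intro y
      rw [dotProduct_add, m2_add]
      have : w ⬝ᵥ Pi.single j 1 = 1 := by
        rw [dotProduct_single, mul_one, hwj]
      rw [this]
      norm_num [m2, val1]
    have hinv : ∑ y : Fin k → ZMod 2, m2 (w ⬝ᵥ y)
        = ∑ y : Fin k → ZMod 2, m2 (w ⬝ᵥ (y + Pi.single j 1)) :=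
      (Fintype.sum_equiv (Equiv.addRight (Pi.single j 1)) _ _ (fun y => rfl)).symm
    have : ∑ y : Fin k → ZMod 2, m2 (w ⬝ᵥ y) = - ∑ y : Fin k → ZMod 2, m2 (w ⬝ᵥ y) := by
      conv_lhs => rw [hinv]
      rw [← Finset.sum_neg_distrib]
      exact Finset.sum_congr rfl fun y _ => key y
    linear_combination (1/2 : ℂ) * this

noncomputable def f4 : ZMod 2 → ZMod 4 := fun b => (b.val : ZMod 4)

noncomputable def Qf (A : Matrix (Fin k) (Fin k) (ZMod 2)) (z : Fin k → ZMod 2) : ZMod 4 :=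
  ∑ j, ∑ l, f4 (A j l) * f4 (z j) * f4 (z l)

lemma f4_add : ∀ a b : ZMod 2, f4 (a + b) = f4 a + f4 b + 2 * (f4 a * f4 b) := by decide

lemma Qf_add (A : Matrix (Fin k) (Fin k) (ZMod 2)) (hA : ∀ j l, A j l = A l j)
    (z q : Fin k → ZMod 2) :
    Qf A (z + q) = Qf A z + Qf A q +
      2 * ∑ j, ∑ l, f4 (A j l) * f4 (z j) * f4 (q l) := by
  classical
  have h4 : (4 : ZMod 4) = 0 := by decide
  -- S g notation
  set S : ((Fin k) → (Fin k) → ZMod 4) → ZMod 4 :=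
    fun g => ∑ j, ∑ l, f4 (A j l) * g j l with hS
  have hswap : ∀ g : (Fin k) → (Fin k) → ZMod 4, S g = S (fun j l => g l j) := by
    intro g
    rw [hS]
    simp only
    rw [Finset.sum_comm]
    exact Finset.sum_congr rfl fun l _ => Finset.sum_congr rfl fun j _ => by rw [hA j l]
  have expand : ∀ j l : Fin k,
      f4 (A j l) * f4 ((z + q) j) * f4 ((z + q) l) =
        f4 (A j l) * (f4 (z j) * f4 (z l)) + f4 (A j l) * (f4 (q j) * f4 (q l)) +
        (f4 (A j l) * (f4 (z j) * f4 (q l)) + f4 (A j l) * (f4 (q j) * f4 (z l))) +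
        (2 * (f4 (A j l) * (f4 (z j) * f4 (z l) * f4 (q l))) +
         2 * (f4 (A j l) * (f4 (q j) * f4 (z l) * f4 (q l))) +
         2 * (f4 (A j l) * (f4 (z j) * f4 (q j) * f4 (z l))) +
         2 * (f4 (A j l) * (f4 (z j) * f4 (q j) * f4 (q l)))) := by
    intro j l
    have hzj : f4 ((z + q) j) = f4 (z j) + f4 (q j) + 2 * (f4 (z j) * f4 (q j)) := f4_add _ _
    have hzl : f4 ((z + q) l) = f4 (z l) + f4 (q l) + 2 * (f4 (z l) * f4 (q l)) := f4_add _ _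
    rw [hzj, hzl]
    linear_combination (f4 (A j l) * f4 (z j) * f4 (q j) * f4 (z l) * f4 (q l)) * h4
  have hQ : Qf A (z + q) =
      S (fun j l => f4 (z j) * f4 (z l)) + S (fun j l => f4 (q j) * f4 (q l)) +
      (S (fun j l => f4 (z j) * f4 (q l)) + S (fun j l => f4 (q j) * f4 (z l))) +
      (2 * S (fun j l => f4 (z j) * f4 (z l) * f4 (q l)) +
       2 * S (fun j l => f4 (q j) * f4 (z l) * f4 (q l)) +
       2 * S (fun j l => f4 (z j) * f4 (q j) * f4 (z l)) +
       2 * S (fun j l => f4 (z j) * f4 (q j) * f4 (q l))) := by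
    rw [Qf]
    rw [Finset.sum_congr rfl fun j _ => Finset.sum_congr rfl fun l _ => expand j l]
    simp only [hS, Finset.sum_add_distrib, Finset.mul_sum]
  rw [hQ]
  have e1 : S (fun j l => f4 (q j) * f4 (z l)) = S (fun j l => f4 (z j) * f4 (q l)) := by
    rw [hswap (fun j l => f4 (q j) * f4 (z l))]
    exact Finset.sum_congr rfl fun j _ => Finset.sum_congr rfl fun l _ => by ring
  have e2 : S (fun j l => f4 (z j) * f4 (q j) * f4 (z l)) =
      S (fun j l => f4 (z j) * f4 (z l) * f4 (q l)) := by
    rw [hswap (fun j l => f4 (z j) * f4 (q j) * f4 (z l))]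
    exact Finset.sum_congr rfl fun j _ => Finset.sum_congr rfl fun l _ => by ring
  have e3 : S (fun j l => f4 (z j) * f4 (q j) * f4 (q l)) =
      S (fun j l => f4 (q j) * f4 (z l) * f4 (q l)) := by
    rw [hswap (fun j l => f4 (z j) * f4 (q j) * f4 (q l))]
    exact Finset.sum_congr rfl fun j _ => Finset.sum_congr rfl fun l _ => by ring
  have hQz : Qf A z = S (fun j l => f4 (z j) * f4 (z l)) := by
    rw [Qf, hS]
    exact Finset.sum_congr rfl fun j _ => Finset.sum_congr rfl fun l _ => by ring
  have hQq : Qf A q = S (fun j l => f4 (q j) * f4 (q l)) := by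
    rw [Qf, hS]
    exact Finset.sum_congr rfl fun j _ => Finset.sum_congr rfl fun l _ => by ring
  have hR : (∑ j, ∑ l, f4 (A j l) * f4 (z j) * f4 (q l)) =
      S (fun j l => f4 (z j) * f4 (q l)) := by
    exact Finset.sum_congr rfl fun j _ => Finset.sum_congr rfl fun l _ => by ring
  rw [hQz, hQq, hR, e1, e2, e3]
  linear_combination (S (fun j l => f4 (z j) * f4 (z l) * f4 (q l)) +
    S (fun j l => f4 (q j) * f4 (z l) * f4 (q l))) * h4

section proj
variable {W : Type*} [Fintype W] [DecidableEq W]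
set_option linter.unusedSectionVars false

lemma vmv_herm (u : W → ℂ) : (vecMulVec u (star u))ᴴ = vecMulVec u (star u) := by
  ext x y
  simp [Matrix.conjTranspose_apply, Matrix.vecMulVec_apply, mul_comm]

lemma vmv_mul_vmv (u v : W → ℂ) :
    vecMulVec u (star u) * vecMulVec v (star v) =
      (star u ⬝ᵥ v) • vecMulVec u (star v) := by
  ext x z
  simp only [Matrix.mul_apply, Matrix.vecMulVec_apply, Matrix.smul_apply, dotProduct,
    smul_eq_mul, Pi.star_apply, RCLike.star_def]
  rw [Finset.sum_mul]
  congr 1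
  ext y
  ring

lemma vmv_idem (u : W → ℂ) (h : star u ⬝ᵥ u = 1) :
    vecMulVec u (star u) * vecMulVec u (star u) = vecMulVec u (star u) := by
  rw [vmv_mul_vmv, h, one_smul]

lemma vmv_orth (u v : W → ℂ) (h : star u ⬝ᵥ v = 0) :
    vecMulVec u (star u) * vecMulVec v (star v) = 0 := by
  rw [vmv_mul_vmv, h, zero_smul]

lemma vmv_rank (u : W → ℂ) (h : star u ⬝ᵥ u = 1) :
    (vecMulVec u (star u)).rank = 1 := by
  have hle : (vecMulVec u (star u)).rank ≤ 1 := by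
    calc (vecMulVec u (star u)).rank
        = (Matrix.replicateCol Unit u * Matrix.replicateRow Unit (star u)).rank := by
          rw [Matrix.vecMulVec_eq Unit]
      _ ≤ (Matrix.replicateCol Unit u).rank := Matrix.rank_mul_le_left _ _
      _ ≤ Fintype.card Unit := Matrix.rank_le_card_width _
      _ = 1 := by simp
  have hu : u ≠ 0 := by
    intro h0
    rw [h0] at h
    simp [dotProduct] at h
  have hmem : u ∈ LinearMap.range (vecMulVec u (star u)).mulVecLin := by
    refine ⟨u, ?_⟩
    ext x
    simp only [Matrix.mulVecLin_apply, Matrix.mulVec, Matrix.vecMulVec_apply, dotProduct]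
    calc ∑ y, u x * star u y * u y = u x * ∑ y, star u y * u y := by
          rw [Finset.mul_sum]; exact Finset.sum_congr rfl fun y _ => by ring
      _ = u x := by rw [show ∑ y, star u y * u y = star u ⬝ᵥ u from rfl, h, mul_one]
  have hne : (vecMulVec u (star u)).rank ≠ 0 := by
    intro h0
    rw [Matrix.rank] at h0
    rw [Submodule.finrank_eq_zero] at h0
    rw [h0] at hmem
    exact hu (by simpa using hmem)
  omega

lemma trace_mul_vmv (M : Matrix W W ℂ) (u : W → ℂ) :
    Matrix.trace (M * vecMulVec u (star u)) =
      ∑ x, ∑ y, (starRingEnd ℂ) (u x) * (M x y * u y) := by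
  rw [Matrix.trace]
  simp only [Matrix.diag_apply, Matrix.mul_apply, Matrix.vecMulVec_apply, Pi.star_apply,
    RCLike.star_def]
  exact Finset.sum_congr rfl fun x _ => Finset.sum_congr rfl fun y _ => by ring

end proj

lemma zmod2_val_cast : ∀ b : ZMod 2, ((b.val : ℕ) : ZMod 2) = b := by decide

lemma zmod4_neg_two_mul : ∀ t : ZMod 4, -(2 * t) = 2 * t := by decide

lemma zmod2_add_eq_zero : ∀ a b : ZMod 2, (a + b = 0) ↔ a = b := by decide

lemma pi_add_eq_zero (p r : Fin k → ZMod 2) : p + r = 0 ↔ p = r := by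
  constructor
  · intro h
    funext j
    exact (zmod2_add_eq_zero (p j) (r j)).1 (congrFun h j)
  · intro h
    funext j
    exact (zmod2_add_eq_zero (p j) (r j)).2 (congrFun h j)

-- s⁻¹ facts
noncomputable def sC (k : ℕ) : ℂ := ((Real.sqrt (2 ^ k) : ℝ) : ℂ)⁻¹

lemma conj_sC : (starRingEnd ℂ) (sC k) = sC k := by
  rw [sC, map_inv₀, Complex.conj_ofReal]

lemma sC_mul_self : sC k * sC k = ((2 : ℂ) ^ k)⁻¹ := by
  rw [sC, ← mul_inv]
  congr 1
  rw [← Complex.ofReal_mul, Real.mul_self_sqrt (by positivity)]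
  push_cast
  ring

lemma card_V : (Fintype.card (Fin k → ZMod 2) : ℂ) = 2 ^ k := by
  simp [Fintype.card_fun]

-- amplitude in ZMod-coordinates
noncomputable def svV (A : Matrix (Fin k) (Fin k) (ZMod 2)) (c : Fin k → ZMod 2) :
    (Fin k → ZMod 2) → ℂ := fun z => sC k * (zi (Qf A z) * m2 (c ⬝ᵥ z))

noncomputable def sv (A : Matrix (Fin k) (Fin k) (ZMod 2)) (c : Fin k → ZMod 2) :
    (Fin k → Fin 2) → ℂ := fun x => svV A c (T x)

lemma conj_svV (A : Matrix (Fin k) (Fin k) (ZMod 2)) (c z : Fin k → ZMod 2) :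
    (starRingEnd ℂ) (svV A c z) = sC k * (zi (- Qf A z) * m2 (c ⬝ᵥ z)) := by
  rw [svV]
  simp only [_root_.map_mul, conj_sC, conj_zi, conj_m2]

lemma svV_mul_conj (A : Matrix (Fin k) (Fin k) (ZMod 2)) (c z : Fin k → ZMod 2) :
    (starRingEnd ℂ) (svV A c z) * svV A c z = ((2 : ℂ) ^ k)⁻¹ := by
  rw [conj_svV, svV]
  have h1 : zi (- Qf A z) * zi (Qf A z) = 1 := by
    rw [← zi_add, neg_add_cancel]
    norm_num [zi, show ZMod.val (0 : ZMod 4) = 0 from rfl]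
  calc sC k * (zi (- Qf A z) * m2 (c ⬝ᵥ z)) * (sC k * (zi (Qf A z) * m2 (c ⬝ᵥ z)))
      = (sC k * sC k) * (zi (- Qf A z) * zi (Qf A z)) * (m2 (c ⬝ᵥ z) * m2 (c ⬝ᵥ z)) := by ring
    _ = ((2 : ℂ) ^ k)⁻¹ := by rw [sC_mul_self, h1, m2_mul_self, mul_one, mul_one]

lemma sv_norm (A : Matrix (Fin k) (Fin k) (ZMod 2)) (c : Fin k → ZMod 2) :
    star (sv A c) ⬝ᵥ sv A c = 1 := by
  have : star (sv A c) ⬝ᵥ sv A c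
      = ∑ x : Fin k → Fin 2, (starRingEnd ℂ) (svV A c (T x)) * svV A c (T x) := rfl
  rw [this, Equiv.sum_comp (T : (Fin k → Fin 2) ≃ (Fin k → ZMod 2))
    (fun z => (starRingEnd ℂ) (svV A c z) * svV A c z)]
  rw [Finset.sum_congr rfl fun z _ => svV_mul_conj A c z]
  rw [Finset.sum_const, Finset.card_univ, nsmul_eq_mul, card_V]
  exact mul_inv_cancel₀ (pow_ne_zero k two_ne_zero)

lemma sv_orth (A : Matrix (Fin k) (Fin k) (ZMod 2)) (c c' : Fin k → ZMod 2)
    (h : c ≠ c') : star (sv A c) ⬝ᵥ sv A c' = 0 := by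
  have : star (sv A c) ⬝ᵥ sv A c'
      = ∑ x : Fin k → Fin 2, (starRingEnd ℂ) (svV A c (T x)) * svV A c' (T x) := rfl
  rw [this, Equiv.sum_comp (T : (Fin k → Fin 2) ≃ (Fin k → ZMod 2))
    (fun z => (starRingEnd ℂ) (svV A c z) * svV A c' z)]
  have key : ∀ z, (starRingEnd ℂ) (svV A c z) * svV A c' z
      = ((2 : ℂ) ^ k)⁻¹ * m2 ((c + c') ⬝ᵥ z) := by
    intro z
    rw [conj_svV, svV]
    have h1 : zi (- Qf A z) * zi (Qf A z) = 1 := by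
      rw [← zi_add, neg_add_cancel]
      norm_num [zi, show ZMod.val (0 : ZMod 4) = 0 from rfl]
    calc sC k * (zi (- Qf A z) * m2 (c ⬝ᵥ z)) * (sC k * (zi (Qf A z) * m2 (c' ⬝ᵥ z)))
        = (sC k * sC k) * (zi (- Qf A z) * zi (Qf A z)) * (m2 (c ⬝ᵥ z) * m2 (c' ⬝ᵥ z)) := by
          ring
      _ = ((2:ℂ)^k)⁻¹ * m2 ((c + c') ⬝ᵥ z) := by
          rw [sC_mul_self, h1, mul_one, ← m2_add, ← add_dotProduct]
  rw [Finset.sum_congr rfl fun z _ => key z, ← Finset.mul_sum, sum_m2_dot]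
  rw [if_neg (by
    intro hc
    exact h ((pi_add_eq_zero c c').1 hc))]
  ring

lemma pauli_apply' (p q : Fin k → ZMod 2) (x y : Fin k → Fin 2) :
    pauli p q x y = Complex.I ^ (∑ j, (p j).val * (q j).val) *
      (m2 (p ⬝ᵥ T x) * (if T x = T y + q then 1 else 0)) := by
  rw [pauli_apply]
  congr 2
  rw [← m2_natCast]
  congr 1
  rw [Nat.cast_sum, dotProduct]
  exact Finset.sum_congr rfl fun j _ => by
    rw [Nat.cast_mul, zmod2_val_cast]; rfl

lemma zi_two_sum (A : Matrix (Fin k) (Fin k) (ZMod 2)) (z q : Fin k → ZMod 2) :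
    zi (2 * ∑ j, ∑ l, f4 (A j l) * f4 (z j) * f4 (q l)) = m2 (z ⬝ᵥ A.mulVec q) := by
  have hcast : (∑ j, ∑ l, f4 (A j l) * f4 (z j) * f4 (q l)) =
      ((∑ j, ∑ l, (A j l).val * (z j).val * (q l).val : ℕ) : ZMod 4) := by
    rw [Nat.cast_sum]
    refine Finset.sum_congr rfl fun j _ => ?_
    rw [Nat.cast_sum]
    refine Finset.sum_congr rfl fun l _ => ?_
    rw [Nat.cast_mul, Nat.cast_mul]
    rfl
  set N : ℕ := ∑ j, ∑ l, (A j l).val * (z j).val * (q l).val with hN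
  have h2 : (2 : ZMod 4) * (N : ZMod 4) = ((2 * N : ℕ) : ZMod 4) := by push_cast; ring
  rw [hcast, h2, zi_natCast, pow_mul, Complex.I_sq, ← m2_natCast]
  congr 1
  rw [hN, Nat.cast_sum, dotProduct]
  refine Finset.sum_congr rfl fun j _ => ?_
  rw [Nat.cast_sum, Matrix.mulVec, dotProduct, Finset.mul_sum]
  refine Finset.sum_congr rfl fun l _ => ?_
  rw [Nat.cast_mul, Nat.cast_mul, zmod2_val_cast, zmod2_val_cast, zmod2_val_cast]
  ring

lemma sum2_T (g : (Fin k → ZMod 2) → (Fin k → ZMod 2) → ℂ) :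
    (∑ x : Fin k → Fin 2, ∑ y : Fin k → Fin 2, g (T x) (T y)) =
      ∑ zx : Fin k → ZMod 2, ∑ zy : Fin k → ZMod 2, g zx zy := by
  rw [← Equiv.sum_comp (T : (Fin k → Fin 2) ≃ (Fin k → ZMod 2))
    (fun zx => ∑ zy : Fin k → ZMod 2, g zx zy)]
  exact Finset.sum_congr rfl fun x _ =>
    Equiv.sum_comp (T : (Fin k → Fin 2) ≃ (Fin k → ZMod 2)) _

lemma trace_pauli_sv (A : Matrix (Fin k) (Fin k) (ZMod 2)) (hA : ∀ j l, A j l = A l j)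
    (p q c : Fin k → ZMod 2) :
    Matrix.trace (pauli p q * vecMulVec (sv A c) (star (sv A c))) =
      (((2:ℂ)^k)⁻¹ * Complex.I ^ (∑ j, (p j).val * (q j).val) * zi (- Qf A q) * m2 (p ⬝ᵥ q))
        * m2 (c ⬝ᵥ q) * (if p = A.mulVec q then ((2:ℂ)^k) else 0) := by
  rw [trace_mul_vmv]
  -- reindex both sums over ZMod-coordinates
  have step1 : ∀ x y : Fin k → Fin 2,
      (starRingEnd ℂ) (sv A c x) * (pauli p q x y * sv A c y) =
        (starRingEnd ℂ) (svV A c (T x)) *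
          (Complex.I ^ (∑ j, (p j).val * (q j).val) *
            (m2 (p ⬝ᵥ T x) * (if T x = T y + q then 1 else 0)) * svV A c (T y)) := by
    intro x y
    rw [pauli_apply']
    rfl
  rw [Finset.sum_congr rfl fun x _ => Finset.sum_congr rfl fun y _ => step1 x y]
  have step2 :
      (∑ x : Fin k → Fin 2, ∑ y : Fin k → Fin 2,
        (starRingEnd ℂ) (svV A c (T x)) *
          (Complex.I ^ (∑ j, (p j).val * (q j).val) *
            (m2 (p ⬝ᵥ T x) * (if T x = T y + q then 1 else 0)) * svV A c (T y))) =
      ∑ zx : Fin k → ZMod 2, ∑ zy : Fin k → ZMod 2,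
        (starRingEnd ℂ) (svV A c zx) *
          (Complex.I ^ (∑ j, (p j).val * (q j).val) *
            (m2 (p ⬝ᵥ zx) * (if zx = zy + q then 1 else 0)) * svV A c zy) := by
    exact sum2_T (fun zx zy => (starRingEnd ℂ) (svV A c zx) *
      ((Complex.I ^ ∑ j, (p j).val * (q j).val) *
        (m2 (p ⬝ᵥ zx) * if zx = zy + q then 1 else 0) * svV A c zy))
  rw [step2]
  -- collapse the zx-sum
  rw [Finset.sum_comm]
  have step3 : ∀ zy : Fin k → ZMod 2,
      (∑ zx : Fin k → ZMod 2,
        (starRingEnd ℂ) (svV A c zx) *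
          (Complex.I ^ (∑ j, (p j).val * (q j).val) *
            (m2 (p ⬝ᵥ zx) * (if zx = zy + q then 1 else 0)) * svV A c zy)) =
      (starRingEnd ℂ) (svV A c (zy + q)) *
          (Complex.I ^ (∑ j, (p j).val * (q j).val) *
            (m2 (p ⬝ᵥ (zy + q))) * svV A c zy) := by
    intro zy
    rw [show (∑ zx : Fin k → ZMod 2,
        (starRingEnd ℂ) (svV A c zx) *
          (Complex.I ^ (∑ j, (p j).val * (q j).val) *
            (m2 (p ⬝ᵥ zx) * (if zx = zy + q then 1 else 0)) * svV A c zy)) =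
      ∑ zx : Fin k → ZMod 2, (if zx = zy + q then
        (starRingEnd ℂ) (svV A c zx) *
          (Complex.I ^ (∑ j, (p j).val * (q j).val) *
            (m2 (p ⬝ᵥ zx)) * svV A c zy) else 0) from
      Finset.sum_congr rfl fun zx _ => by split_ifs <;> ring]
    rw [Finset.sum_ite_eq' Finset.univ (zy + q)]
    simp only [Finset.mem_univ, if_true]
  rw [Finset.sum_congr rfl fun zy _ => step3 zy]
  -- pointwise evaluation
  have step4 : ∀ z : Fin k → ZMod 2,
      (starRingEnd ℂ) (svV A c (z + q)) *
          (Complex.I ^ (∑ j, (p j).val * (q j).val) *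
            (m2 (p ⬝ᵥ (z + q))) * svV A c z) =
      (((2:ℂ)^k)⁻¹ * Complex.I ^ (∑ j, (p j).val * (q j).val) * zi (- Qf A q) * m2 (p ⬝ᵥ q))
        * m2 (c ⬝ᵥ q) * m2 ((p + A.mulVec q) ⬝ᵥ z) := by
    intro z
    rw [conj_svV, svV]
    have hQ : - Qf A (z + q) = - Qf A z + (- Qf A q) +
        2 * ∑ j, ∑ l, f4 (A j l) * f4 (z j) * f4 (q l) := by
      rw [Qf_add A hA z q]
      rw [show ∀ a b t : ZMod 4, -(a + b + 2*t) = -a + (-b) + -(2*t) from fun a b t => by ring,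
        zmod4_neg_two_mul]
    have hz1 : zi (- Qf A (z + q)) * zi (Qf A z) =
        zi (- Qf A q) * m2 (z ⬝ᵥ A.mulVec q) := by
      rw [hQ, zi_add, zi_add, zi_two_sum]
      have : zi (- Qf A z) * zi (Qf A z) = 1 := by
        rw [← zi_add, neg_add_cancel]
        norm_num [zi, show ZMod.val (0 : ZMod 4) = 0 from rfl]
      calc zi (- Qf A z) * zi (- Qf A q) * m2 (z ⬝ᵥ A.mulVec q) * zi (Qf A z)
          = (zi (- Qf A z) * zi (Qf A z)) * (zi (- Qf A q) * m2 (z ⬝ᵥ A.mulVec q)) := by ring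
        _ = zi (- Qf A q) * m2 (z ⬝ᵥ A.mulVec q) := by rw [this, one_mul]
    have hm1 : m2 (c ⬝ᵥ (z + q)) * m2 (c ⬝ᵥ z) = m2 (c ⬝ᵥ q) := by
      rw [dotProduct_add, m2_add]
      calc m2 (c ⬝ᵥ z) * m2 (c ⬝ᵥ q) * m2 (c ⬝ᵥ z)
          = (m2 (c ⬝ᵥ z) * m2 (c ⬝ᵥ z)) * m2 (c ⬝ᵥ q) := by ring
        _ = m2 (c ⬝ᵥ q) := by rw [m2_mul_self, one_mul]
    have hm2 : m2 (p ⬝ᵥ (z + q)) = m2 (p ⬝ᵥ z) * m2 (p ⬝ᵥ q) := by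
      rw [dotProduct_add, m2_add]
    have hm3 : m2 (p ⬝ᵥ z) * m2 (z ⬝ᵥ A.mulVec q) = m2 ((p + A.mulVec q) ⬝ᵥ z) := by
      rw [add_dotProduct, m2_add, dotProduct_comm z (A.mulVec q)]
    calc sC k * (zi (- Qf A (z + q)) * m2 (c ⬝ᵥ (z + q))) *
          (Complex.I ^ (∑ j, (p j).val * (q j).val) * m2 (p ⬝ᵥ (z + q)) *
            (sC k * (zi (Qf A z) * m2 (c ⬝ᵥ z))))
        = (sC k * sC k) * Complex.I ^ (∑ j, (p j).val * (q j).val) *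
            (zi (- Qf A (z + q)) * zi (Qf A z)) *
            (m2 (c ⬝ᵥ (z + q)) * m2 (c ⬝ᵥ z)) * m2 (p ⬝ᵥ (z + q)) := by ring
      _ = ((2:ℂ)^k)⁻¹ * Complex.I ^ (∑ j, (p j).val * (q j).val) *
            (zi (- Qf A q) * m2 (z ⬝ᵥ A.mulVec q)) * m2 (c ⬝ᵥ q) *
            (m2 (p ⬝ᵥ z) * m2 (p ⬝ᵥ q)) := by rw [sC_mul_self, hz1, hm1, hm2]
      _ = (((2:ℂ)^k)⁻¹ * Complex.I ^ (∑ j, (p j).val * (q j).val) * zi (- Qf A q) *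
            m2 (p ⬝ᵥ q)) * m2 (c ⬝ᵥ q) * (m2 (p ⬝ᵥ z) * m2 (z ⬝ᵥ A.mulVec q)) := by ring
      _ = (((2:ℂ)^k)⁻¹ * Complex.I ^ (∑ j, (p j).val * (q j).val) * zi (- Qf A q) *
            m2 (p ⬝ᵥ q)) * m2 (c ⬝ᵥ q) * m2 ((p + A.mulVec q) ⬝ᵥ z) := by rw [hm3]
  rw [Finset.sum_congr rfl fun z _ => step4 z]
  rw [← Finset.mul_sum, sum_m2_dot]
  congr 1
  by_cases h : p = A.mulVec q
  · rw [if_pos h, if_pos ((pi_add_eq_zero p (A.mulVec q)).2 h)]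
  · rw [if_neg h, if_neg (fun hc => h ((pi_add_eq_zero p (A.mulVec q)).1 hc))]

-- computational basis states
noncomputable def ev (c : Fin k → ZMod 2) : (Fin k → Fin 2) → ℂ :=
  fun x => if T x = c then 1 else 0

lemma conj_ev (c : Fin k → ZMod 2) (x : Fin k → Fin 2) :
    (starRingEnd ℂ) (ev c x) = ev c x := by
  rw [ev]
  split_ifs <;> simp

lemma ev_norm (c : Fin k → ZMod 2) : star (ev c) ⬝ᵥ ev c = 1 := by
  have : star (ev c) ⬝ᵥ ev c = ∑ x : Fin k → Fin 2, (starRingEnd ℂ) (ev c x) * ev c x := rfl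
  rw [this, Finset.sum_congr rfl fun x _ => by rw [conj_ev]]
  have : ∀ x : Fin k → Fin 2, ev c x * ev c x = if T x = c then 1 else 0 := by
    intro x; rw [ev]; split_ifs <;> norm_num
  rw [Finset.sum_congr rfl fun x _ => this x]
  rw [Equiv.sum_comp (T : (Fin k → Fin 2) ≃ (Fin k → ZMod 2)) (fun z => if z = c then (1:ℂ) else 0)]
  simp

lemma ev_orth (c c' : Fin k → ZMod 2) (h : c ≠ c') : star (ev c) ⬝ᵥ ev c' = 0 := by
  have : star (ev c) ⬝ᵥ ev c' = ∑ x : Fin k → Fin 2, (starRingEnd ℂ) (ev c x) * ev c' x := rfl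
  rw [this, Finset.sum_congr rfl fun x _ => by rw [conj_ev]]
  refine Finset.sum_eq_zero fun x _ => ?_
  rw [ev, ev]
  split_ifs with h1 h2
  · exact absurd (h1 ▸ h2 : c = c') h
  · ring
  · ring
  · ring

lemma trace_pauli_ev (p q c : Fin k → ZMod 2) :
    Matrix.trace (pauli p q * vecMulVec (ev c) (star (ev c))) =
      Complex.I ^ (∑ j, (p j).val * (q j).val) * m2 (p ⬝ᵥ c) *
        (if q = 0 then 1 else 0) := by
  rw [trace_mul_vmv]
  have key : ∀ x y : Fin k → Fin 2,
      (starRingEnd ℂ) (ev c x) * (pauli p q x y * ev c y) =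
        (if T x = c then 1 else 0) * (if T y = c then 1 else 0) * pauli p q x y := by
    intro x y
    rw [conj_ev, ev, ev]
    ring
  rw [Finset.sum_congr rfl fun x _ => Finset.sum_congr rfl fun y _ => key x y]
  have step : ∀ x : Fin k → Fin 2,
      (∑ y : Fin k → Fin 2, (if T x = c then (1:ℂ) else 0) * (if T y = c then 1 else 0) *
        pauli p q x y) = (if T x = c then (1:ℂ) else 0) * pauli p q x (T.symm c) := by
    intro x
    rw [show (∑ y : Fin k → Fin 2, (if T x = c then (1:ℂ) else 0) * (if T y = c then 1 else 0) *
        pauli p q x y) = ∑ y : Fin k → Fin 2, (if y = T.symm c then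
          (if T x = c then (1:ℂ) else 0) * pauli p q x y else 0) from
      Finset.sum_congr rfl fun y _ => by
        have : (T y = c) ↔ (y = T.symm c) := by
          constructor
          · intro h; rw [← h]; exact (T.symm_apply_apply y).symm
          · intro h; rw [h]; exact T.apply_symm_apply c
        simp only [this]
        split_ifs <;> ring]
    rw [Finset.sum_ite_eq' Finset.univ (T.symm c)]
    simp only [Finset.mem_univ, if_true]
  rw [Finset.sum_congr rfl fun x _ => step x]
  rw [show (∑ x : Fin k → Fin 2, (if T x = c then (1:ℂ) else 0) * pauli p q x (T.symm c)) =
      ∑ x : Fin k → Fin 2, (if x = T.symm c then pauli p q x (T.symm c) else 0) from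
    Finset.sum_congr rfl fun x _ => by
      have : (T x = c) ↔ (x = T.symm c) := by
        constructor
        · intro h; rw [← h]; exact (T.symm_apply_apply x).symm
        · intro h; rw [h]; exact T.apply_symm_apply c
      simp only [this]
      split_ifs <;> ring]
  rw [Finset.sum_ite_eq' Finset.univ (T.symm c)]
  simp only [Finset.mem_univ, if_true]
  rw [pauli_apply']
  rw [T.apply_symm_apply]
  have : (c = c + q) ↔ (q = 0) := by
    constructor
    · intro h
      have := congrArg (fun v => v - c) h
      simpa using this.symm
    · intro h; rw [h, add_zero]
  simp only [this]
  ring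

-- orthogonal complement lemma
lemma exists_perp (hk : 0 < k) (S : Finset (Fin k → ZMod 2)) (hcard : S.card < k) :
    ∃ d : Fin k → ZMod 2, d ≠ 0 ∧ ∀ w ∈ S, w ⬝ᵥ d = 0 := by
  haveI : Fact (Nat.Prime 2) := ⟨Nat.prime_two⟩
  by_contra hcon
  push_neg at hcon
  have hinj : Function.Injective
      (LinearMap.mk (σ := RingHom.id (ZMod 2))
        ⟨fun d => (fun s : {x // x ∈ S} => (s : Fin k → ZMod 2) ⬝ᵥ d), by
          intro d d'; funext s; exact dotProduct_add _ _ _⟩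
        (by
          intro r d; funext s
          simp only [RingHom.id_apply]
          exact dotProduct_smul r _ _) :
        (Fin k → ZMod 2) →ₗ[ZMod 2] ({x // x ∈ S} → ZMod 2)) := by
    rw [← LinearMap.ker_eq_bot]
    rw [Submodule.eq_bot_iff]
    intro d hd
    by_contra hd0
    obtain ⟨w, hwS, hw⟩ := hcon d hd0
    have : (fun s : {x // x ∈ S} => (s : Fin k → ZMod 2) ⬝ᵥ d) = 0 := hd
    exact hw (congrFun this ⟨w, hwS⟩)
  have hle := LinearMap.finrank_le_finrank_of_injective hinj
  rw [Module.finrank_pi, Module.finrank_pi] at hle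
  rw [Fintype.card_coe, Fintype.card_fin] at hle
  omega

instance fact2 : Fact (Nat.Prime 2) := ⟨Nat.prime_two⟩

lemma exists_family (hk : 0 < k) :
    ∃ Am : GaloisField 2 k → Matrix (Fin k) (Fin k) (ZMod 2),
      (∀ a j l, Am a j l = Am a l j) ∧
      (∀ a b (q : Fin k → ZMod 2), a ≠ b → (Am a).mulVec q = (Am b).mulVec q → q = 0) := by
  have hfr : Module.finrank (ZMod 2) (GaloisField 2 k) = k := GaloisField.finrank 2 hk.ne'
  set F := GaloisField 2 k with hF
  let bb : Module.Basis (Fin k) (ZMod 2) F := (Module.finBasis (ZMod 2) F).reindex (finCongr hfr)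
  refine ⟨fun a => Matrix.of fun j l => Algebra.trace (ZMod 2) F (a * bb j * bb l), ?_, ?_⟩
  · intro a j l
    simp only [Matrix.of_apply]
    congr 1
    ring
  · intro a b q hab h
    set qF : F := ∑ l, q l • bb l with hqF
    have hzero : ∀ j, Algebra.traceForm (ZMod 2) F ((a - b) * qF) (bb j) = 0 := by
      intro j
      have hj := congrFun h j
      simp only [Matrix.mulVec, dotProduct, Matrix.of_apply] at hj
      rw [Algebra.traceForm_apply]
      have e1 : (a - b) * qF * bb j = ∑ l, q l • ((a - b) * bb l * bb j) := by
        rw [hqF, Finset.mul_sum, Finset.sum_mul]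
        refine Finset.sum_congr rfl fun l _ => ?_
        rw [mul_smul_comm, smul_mul_assoc]
      rw [e1, map_sum]
      have e2 : ∀ l, Algebra.trace (ZMod 2) F (q l • ((a - b) * bb l * bb j)) =
          q l * (Algebra.trace (ZMod 2) F (a * bb j * bb l) -
            Algebra.trace (ZMod 2) F (b * bb j * bb l)) := by
        intro l
        rw [LinearMap.map_smul, smul_eq_mul]
        congr 1
        rw [show (a - b) * bb l * bb j = a * bb j * bb l - b * bb j * bb l from by ring,
          map_sub]
      rw [Finset.sum_congr rfl fun l _ => e2 l]
      rw [show (∑ l, q l * (Algebra.trace (ZMod 2) F (a * bb j * bb l) -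
            Algebra.trace (ZMod 2) F (b * bb j * bb l))) =
          (∑ l, Algebra.trace (ZMod 2) F (a * bb j * bb l) * q l) -
          (∑ l, Algebra.trace (ZMod 2) F (b * bb j * bb l) * q l) from by
        rw [← Finset.sum_sub_distrib]
        exact Finset.sum_congr rfl fun l _ => by ring]
      rw [hj, sub_self]
    have hw : (a - b) * qF = 0 := by
      refine (traceForm_nondegenerate (ZMod 2) F).1 ((a - b) * qF) fun v => ?_
      conv_lhs => rw [show v = ∑ i, bb.repr v i • bb i from (bb.sum_repr v).symm]
      rw [map_sum]
      refine Finset.sum_eq_zero fun i _ => ?_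
      rw [LinearMap.map_smul, smul_eq_mul, hzero i, mul_zero]
    have hqF0 : qF = 0 := by
      rcases mul_eq_zero.mp hw with h' | h'
      · exact absurd h' (sub_ne_zero.mpr hab)
      · exact h'
    have hli := Fintype.linearIndependent_iff.mp bb.linearIndependent q (by
      rw [← hqF]; exact hqF0)
    funext l
    exact hli l

end PauliAux


open PauliAux

/-- **Lower bound for Pauli-basis matrix recovery.**  Let `n = 2^k` and let the normalized
Pauli basis be `n^{-1/2} w(p,q)`.  If `Ω` is a set of fewer than `(n−2)·log₂ n` basis
indices, then there are two rank-one orthogonal projections `P₁, P₂` with orthogonal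
ranges whose expansion coefficients agree on all of `Ω`. -/
theorem pauli_recovery_lower_bound {k : ℕ} (hk : 0 < k)
    (Ω : Finset ((Fin k → ZMod 2) × (Fin k → ZMod 2)))
    (hΩ : Ω.card < (2 ^ k - 2) * k) :
    ∃ P₁ P₂ : Matrix (Fin k → Fin 2) (Fin k → Fin 2) ℂ,
      P₁ᴴ = P₁ ∧ P₂ᴴ = P₂ ∧
      P₁ * P₁ = P₁ ∧ P₂ * P₂ = P₂ ∧
      P₁.rank = 1 ∧ P₂.rank = 1 ∧
      P₁ * P₂ = 0 ∧
      ∀ a ∈ Ω,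
        Matrix.trace (((Real.sqrt (2 ^ k) : ℂ))⁻¹ • pauli a.1 a.2 * P₁) =
          Matrix.trace (((Real.sqrt (2 ^ k) : ℂ))⁻¹ • pauli a.1 a.2 * P₂) := by
  classical
  -- general closing step
  have build : ∀ u v : (Fin k → Fin 2) → ℂ, star u ⬝ᵥ u = 1 → star v ⬝ᵥ v = 1 →
      star u ⬝ᵥ v = 0 →
      (∀ a ∈ Ω, Matrix.trace (pauli a.1 a.2 * vecMulVec u (star u)) =
        Matrix.trace (pauli a.1 a.2 * vecMulVec v (star v))) →
      (∃ P₁ P₂ : Matrix (Fin k → Fin 2) (Fin k → Fin 2) ℂ,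
        P₁ᴴ = P₁ ∧ P₂ᴴ = P₂ ∧
        P₁ * P₁ = P₁ ∧ P₂ * P₂ = P₂ ∧
        P₁.rank = 1 ∧ P₂.rank = 1 ∧
        P₁ * P₂ = 0 ∧
        ∀ a ∈ Ω,
          Matrix.trace (((Real.sqrt (2 ^ k) : ℂ))⁻¹ • pauli a.1 a.2 * P₁) =
            Matrix.trace (((Real.sqrt (2 ^ k) : ℂ))⁻¹ • pauli a.1 a.2 * P₂)) := by
    intro u v hu hv huv htr
    refine ⟨vecMulVec u (star u), vecMulVec v (star v), vmv_herm u, vmv_herm v,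
      vmv_idem u hu, vmv_idem v hv, vmv_rank u hu, vmv_rank v hv, vmv_orth u v huv, ?_⟩
    intro a ha
    rw [Matrix.smul_mul, Matrix.trace_smul, Matrix.smul_mul, Matrix.trace_smul, htr a ha]
  obtain ⟨Am, hsym, hdiff⟩ := exists_family (k := k) hk
  let F := GaloisField 2 k
  haveI : Fintype F := Fintype.ofFinite F
  have hcF : Fintype.card F = 2 ^ k := by
    rw [← Nat.card_eq_fintype_card]
    exact GaloisField.card 2 k hk.ne'
  set Tset : Option F → Finset ((Fin k → ZMod 2) × (Fin k → ZMod 2)) :=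
    fun o => o.elim (Ω.filter fun a => a.2 = 0 ∧ a.1 ≠ 0)
      (fun x => Ω.filter fun a => a.2 ≠ 0 ∧ a.1 = (Am x).mulVec a.2) with hTset
  -- pigeonhole
  have hsmall : ∃ o : Option F, (Tset o).card < k := by
    by_contra hcon
    push_neg at hcon
    have hdisj : ∀ o1 ∈ (Finset.univ : Finset (Option F)), ∀ o2 ∈ Finset.univ,
        o1 ≠ o2 → Disjoint (Tset o1) (Tset o2) := by
      intro o1 _ o2 _ hne
      rw [Finset.disjoint_left]
      intro a ha1 ha2
      match o1, o2 with
      | none, none => exact hne rfl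
      | none, some y =>
          rw [hTset] at ha1 ha2
          simp only [Option.elim, Finset.mem_filter] at ha1 ha2
          exact ha2.2.1 ha1.2.1
      | some x, none =>
          rw [hTset] at ha1 ha2
          simp only [Option.elim, Finset.mem_filter] at ha1 ha2
          exact ha1.2.1 ha2.2.1
      | some x, some y =>
          rw [hTset] at ha1 ha2
          simp only [Option.elim, Finset.mem_filter] at ha1 ha2
          have hxy : x ≠ y := fun hcontra => hne (by rw [hcontra])
          exact ha1.2.1 (hdiff x y a.2 hxy (by rw [← ha1.2.2, ← ha2.2.2]))
    have hcard_eq : (Finset.univ.biUnion Tset).card =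
        ∑ o : Option F, (Tset o).card := Finset.card_biUnion hdisj
    have hsub : Finset.univ.biUnion Tset ⊆ Ω := by
      refine Finset.biUnion_subset.mpr fun o _ => ?_
      rw [hTset]
      match o with
      | none => exact Finset.filter_subset _ _
      | some x => exact Finset.filter_subset _ _
    have h1 : ∑ o : Option F, (Tset o).card ≤ Ω.card := by
      rw [← hcard_eq]
      exact Finset.card_le_card hsub
    have h2 : (Fintype.card (Option F)) * k ≤ ∑ o : Option F, (Tset o).card := by
      calc (Fintype.card (Option F)) * k = ∑ _o : Option F, k := by
            rw [Finset.sum_const, Finset.card_univ, smul_eq_mul]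
        _ ≤ ∑ o : Option F, (Tset o).card := Finset.sum_le_sum fun o _ => hcon o
    rw [Fintype.card_option, hcF] at h2
    have hmono : (2 ^ k - 2) * k ≤ (2 ^ k + 1) * k := Nat.mul_le_mul_right k (by omega)
    omega
  obtain ⟨o, ho⟩ := hsmall
  match o with
  | none =>
      -- computational basis case
      set S : Finset (Fin k → ZMod 2) := (Tset none).image Prod.fst with hS
      have hScard : S.card < k := lt_of_le_of_lt Finset.card_image_le ho
      obtain ⟨d, hd0, hdperp⟩ := exists_perp hk S hScard
      refine build (ev 0) (ev d) (ev_norm 0) (ev_norm d)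
        (ev_orth 0 d (fun h0 => hd0 h0.symm)) ?_
      intro a ha
      rw [trace_pauli_ev, trace_pauli_ev]
      by_cases hq : a.2 = 0
      · rw [if_pos hq]
        by_cases hp : a.1 = 0
        · rw [hp]
          rw [zero_dotProduct, zero_dotProduct]
        · have hmem : a ∈ Tset none := by
            rw [hTset]
            simp only [Option.elim, Finset.mem_filter]
            exact ⟨ha, hq, hp⟩
          have hpS : a.1 ∈ S := by
            rw [hS]
            exact Finset.mem_image_of_mem Prod.fst hmem
          rw [dotProduct_zero, hdperp a.1 hpS]
      · rw [if_neg hq, mul_zero, mul_zero]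
  | some x =>
      set A := Am x with hA
      set S : Finset (Fin k → ZMod 2) := (Tset (some x)).image Prod.snd with hS
      have hScard : S.card < k := lt_of_le_of_lt Finset.card_image_le ho
      obtain ⟨d, hd0, hdperp⟩ := exists_perp hk S hScard
      refine build (sv A 0) (sv A d) (sv_norm A 0) (sv_norm A d)
        (sv_orth A 0 d (fun h0 => hd0 h0.symm)) ?_
      intro a ha
      rw [trace_pauli_sv A (hsym x) a.1 a.2 0, trace_pauli_sv A (hsym x) a.1 a.2 d]
      by_cases hpq : a.1 = A.mulVec a.2
      · by_cases hq : a.2 = 0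
        · rw [hq]
          simp only [dotProduct_zero]
        · have hmem : a ∈ Tset (some x) := by
            rw [hTset]
            simp only [Option.elim, Finset.mem_filter]
            exact ⟨ha, hq, hpq⟩
          have hqS : a.2 ∈ S := by
            rw [hS]
            exact Finset.mem_image_of_mem Prod.snd hmem
          rw [zero_dotProduct, dotProduct_comm d a.2, hdperp a.2 hqS]
      · rw [if_neg hpq, mul_zero, mul_zero]
end

section
/- Sampling with replacement cannot outperform sampling without replacement: Let p_with(m) and p_wout(m) be the probabilities that the trace-norm minimization program min ‖σ‖₁ subject to ℛσ = ℛρ has unique solution equal to ρ, when the m basis-element indices A₁,…,A_m defining the sampling operator ℛ are drawn uniformly from [1,n²] with and without replacement respectively. Then p_with(m) ≤ p_wout(m). -/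
open Matrix
open scoped ComplexOrder

/-- The sampling operator `ℛσ = (n²/m) ∑ᵢ w_{Aᵢ} (w_{Aᵢ}, σ)` determined by the sampled
indices `f : Fin m → Fin (n²)`. -/
noncomputable def samplingOp {n m : ℕ} (w : Fin (n ^ 2) → Matrix (Fin n) (Fin n) ℂ)
    (f : Fin m → Fin (n ^ 2)) (σ : Matrix (Fin n) (Fin n) ℂ) :
    Matrix (Fin n) (Fin n) ℂ :=
  ((n ^ 2 : ℂ) / m) • ∑ i, Matrix.trace (w (f i) * σ) • w (f i)

/-- `ρ` is the unique solution of `min ‖σ‖₁ s.t. ℛσ = ℛρ` (over Hermitian matrices)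
for the sample `f`. -/
def uniqueSol {n m : ℕ} (w : Fin (n ^ 2) → Matrix (Fin n) (Fin n) ℂ)
    (ρ : Matrix (Fin n) (Fin n) ℂ) (f : Fin m → Fin (n ^ 2)) : Prop :=
  ∀ σ : Matrix (Fin n) (Fin n) ℂ, σ.IsHermitian →
    samplingOp w f σ = samplingOp w f ρ → σ ≠ ρ → traceNorm ρ < traceNorm σ

section CombAux

open Finset

namespace SamplingComb

variable {N m : ℕ}

/-- number of functions `Fin m → Fin N` with image exactly `S`. -/
def cfib (m : ℕ) {N : ℕ} (S : Finset (Fin N)) : ℕ :=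
  (univ.filter (fun f : Fin m → Fin N => univ.image f = S)).card

lemma strat (Q : Finset (Fin N) → Prop) [DecidablePred Q] :
    (univ.filter (fun f : Fin m → Fin N => Q (univ.image f))).card
      = ∑ S ∈ univ.filter Q, cfib m S := by
  rw [Finset.card_eq_sum_card_fiberwise
    (f := fun f : Fin m → Fin N => univ.image f) (t := univ.filter Q)
    (fun f hf => by simpa using (mem_filter.mp hf).2)]
  refine Finset.sum_congr rfl fun S hS => ?_
  have hQS : Q S := (mem_filter.mp hS).2
  unfold cfib
  congr 1
  ext f
  simp only [mem_filter, mem_univ, true_and]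
  constructor
  · rintro ⟨-, h⟩; exact h
  · intro h; exact ⟨h ▸ hQS, h⟩

lemma czero_empty (hm : 0 < m) : cfib m (∅ : Finset (Fin N)) = 0 := by
  unfold cfib
  rw [Finset.card_eq_zero, Finset.filter_eq_empty_iff]
  intro f _
  have : (⟨0, hm⟩ : Fin m) ∈ (univ : Finset (Fin m)) := mem_univ _
  intro h
  have := Finset.mem_image_of_mem f this
  rw [h] at this
  exact absurd this (Finset.notMem_empty _)

lemma czero_big {S : Finset (Fin N)} (h : m < S.card) : cfib m S = 0 := by
  unfold cfib
  rw [Finset.card_eq_zero, Finset.filter_eq_empty_iff]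
  intro f _ hf
  have h1 : (univ.image f).card ≤ (univ : Finset (Fin m)).card := Finset.card_image_le
  rw [hf, Finset.card_univ, Fintype.card_fin] at h1
  omega

lemma csym {S T : Finset (Fin N)} (h : S.card = T.card) : cfib m S = cfib m T := by
  have hc : Fintype.card {x : Fin N // x ∈ S} = Fintype.card {x : Fin N // x ∈ T} := by
    simpa [Fintype.card_coe] using h
  let e : {x : Fin N // x ∈ S} ≃ {x : Fin N // x ∈ T} := Fintype.equivOfCardEq hc
  let π : Equiv.Perm (Fin N) := e.extendSubtype
  have hπ : Finset.image π S = T := by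
    apply Finset.eq_of_subset_of_card_le
    · intro y hy
      rw [Finset.mem_image] at hy
      obtain ⟨x, hx, rfl⟩ := hy
      exact e.extendSubtype_mem x hx
    · rw [Finset.card_image_of_injective _ π.injective, h]
  unfold cfib
  apply Finset.card_bij' (fun f _ => π ∘ f) (fun g _ => π.symm ∘ g)
  · intro f hf
    simp only [mem_filter, mem_univ, true_and] at hf ⊢
    rw [← Finset.image_image, hf, hπ]
  · intro g hg
    simp only [mem_filter, mem_univ, true_and] at hg ⊢
    rw [← Finset.image_image, hg, ← hπ, Finset.image_image]
    simp
  · intro f _; ext i; simp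
  · intro g _; ext i; simp

lemma tcard (k : ℕ) :
    (univ.filter (fun S : Finset (Fin N) => S.card = k)).card = N.choose k := by
  rw [← Finset.powerset_univ, ← Finset.powersetCard_eq_filter,
    Finset.card_powersetCard, Finset.card_univ, Fintype.card_fin]



variable {N : ℕ} (P : Finset (Fin N) → Prop) [DecidablePred P]

/-- number of good sets of size `k`. -/
def gk (k : ℕ) : ℕ := (univ.filter (fun S : Finset (Fin N) => S.card = k ∧ P S)).card

lemma step (Pmono : ∀ ⦃S T : Finset (Fin N)⦄, S ⊆ T → P S → P T) (k : ℕ) :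
    gk P k * (N - k) ≤ gk P (k + 1) * (k + 1) := by
  classical
  set Gk := univ.filter (fun S : Finset (Fin N) => S.card = k ∧ P S) with hGk
  set Gk1 := univ.filter (fun S : Finset (Fin N) => S.card = k + 1 ∧ P S) with hGk1
  set pairs := (Gk ×ˢ Gk1).filter (fun p => p.1 ⊆ p.2) with hpairs
  have hfst : ∀ p ∈ pairs, p.1 ∈ Gk := by
    intro p hp
    exact (Finset.mem_product.mp (Finset.mem_filter.mp hp).1).1
  have hsnd : ∀ p ∈ pairs, p.2 ∈ Gk1 := by
    intro p hp
    exact (Finset.mem_product.mp (Finset.mem_filter.mp hp).1).2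
  have h1 : gk P k * (N - k) ≤ pairs.card := by
    rw [Finset.card_eq_sum_card_fiberwise hfst]
    have : gk P k * (N - k) = ∑ _S ∈ Gk, (N - k) := by
      rw [Finset.sum_const, smul_eq_mul]; rfl
    rw [this]
    refine Finset.sum_le_sum fun S hS => ?_
    obtain ⟨-, hcard, hPS⟩ := by
      simpa only [hGk, Finset.mem_filter] using hS
    have hcompl : (Sᶜ : Finset (Fin N)).card = N - k := by
      rw [Finset.card_compl, Fintype.card_fin, hcard]
    rw [← hcompl]
    apply Finset.card_le_card_of_injOn (fun x => (S, insert x S))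
    · intro x hx
      have hxS : x ∉ S := Finset.mem_compl.mp hx
      rw [Finset.mem_coe, Finset.mem_filter]
      refine ⟨?_, rfl⟩
      rw [hpairs, Finset.mem_filter, Finset.mem_product]
      refine ⟨⟨hS, ?_⟩, Finset.subset_insert _ _⟩
      rw [hGk1, Finset.mem_filter]
      exact ⟨Finset.mem_univ _, by rw [Finset.card_insert_of_notMem hxS, hcard],
        Pmono (Finset.subset_insert _ _) hPS⟩
    · intro x hx y hy hxy
      have h2 : insert x S = insert y S := congrArg Prod.snd hxy
      have : x ∈ insert y S := h2 ▸ Finset.mem_insert_self x S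
      rcases Finset.mem_insert.mp this with h | h
      · exact h
      · exact absurd h (Finset.mem_compl.mp hx)
  have h2 : pairs.card ≤ gk P (k + 1) * (k + 1) := by
    rw [Finset.card_eq_sum_card_fiberwise hsnd]
    have : gk P (k + 1) * (k + 1) = ∑ _T ∈ Gk1, (k + 1) := by
      rw [Finset.sum_const, smul_eq_mul]; rfl
    rw [this]
    refine Finset.sum_le_sum fun T hT => ?_
    obtain ⟨-, hcard, hPT⟩ := by
      simpa only [hGk1, Finset.mem_filter] using hT
    have : (Finset.powersetCard k T).card = k + 1 := by
      rw [Finset.card_powersetCard, hcard, Nat.choose_succ_self_right]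
    rw [← this]
    apply Finset.card_le_card_of_injOn Prod.fst
    · intro p hp
      rw [Finset.mem_coe, Finset.mem_filter] at hp
      obtain ⟨hpp, hpT⟩ := hp
      rw [hpairs, Finset.mem_filter, Finset.mem_product] at hpp
      obtain ⟨⟨hp1, _⟩, hsub⟩ := hpp
      rw [hGk, Finset.mem_filter] at hp1
      rw [Finset.mem_coe, Finset.mem_powersetCard]
      exact ⟨hpT ▸ hsub, hp1.2.1⟩
    · intro p hp q hq hpq
      have hp2 : p.2 = T := (Finset.mem_filter.mp hp).2
      have hq2 : q.2 = T := (Finset.mem_filter.mp hq).2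
      exact Prod.ext hpq (hp2.trans hq2.symm)
  exact h1.trans h2

lemma ratio (Pmono : ∀ ⦃S T : Finset (Fin N)⦄, S ⊆ T → P S → P T) (k : ℕ) :
    ∀ j, k ≤ j → j ≤ N → gk P k * N.choose j ≤ gk P j * N.choose k := by
  intro j
  induction j with
  | zero => intro h _; simp_all
  | succ j ih =>
    intro hkj hjN
    rcases Nat.lt_or_ge k (j + 1) with h | h
    · have hk : k ≤ j := Nat.lt_succ_iff.mp h
      have ihh := ih hk (Nat.le_of_succ_le hjN)
      have hmul : gk P k * N.choose j * (N - j) ≤ gk P j * (N - j) * N.choose k := by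
        calc gk P k * N.choose j * (N - j) ≤ gk P j * N.choose k * (N - j) :=
              Nat.mul_le_mul_right _ ihh
          _ = gk P j * (N - j) * N.choose k := by ring
      have hstep := step P Pmono j
      have h2 : gk P j * (N - j) * N.choose k ≤ gk P (j + 1) * (j + 1) * N.choose k :=
        Nat.mul_le_mul_right _ hstep
      have hch : N.choose j * (N - j) = N.choose (j + 1) * (j + 1) :=
        (Nat.choose_succ_right_eq N j).symm
      have : gk P k * (N.choose (j + 1) * (j + 1)) ≤ gk P (j + 1) * (j + 1) * N.choose k := by
        calc gk P k * (N.choose (j + 1) * (j + 1)) = gk P k * N.choose j * (N - j) := by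
              rw [← hch]; ring
          _ ≤ gk P (j + 1) * (j + 1) * N.choose k := hmul.trans h2
      have hpos : 0 < j + 1 := Nat.succ_pos j
      have := this
      rw [show gk P k * (N.choose (j+1) * (j+1)) = gk P k * N.choose (j+1) * (j+1) by ring,
        show gk P (j+1) * (j+1) * N.choose k = gk P (j+1) * N.choose k * (j+1) by ring] at this
      exact Nat.le_of_mul_le_mul_right this hpos
    · have : k = j + 1 := le_antisymm hkj h
      subst this
      exact le_of_eq rfl


theorem main_count {N m : ℕ} (hm : 0 < m) (hmN : m ≤ N)
    (P : Finset (Fin N) → Prop) [DecidablePred P]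
    (Pmono : ∀ ⦃S T : Finset (Fin N)⦄, S ⊆ T → P S → P T) :
    (univ.filter (fun f : Fin m → Fin N => P (univ.image f))).card
        * (univ.filter (fun f : Fin m → Fin N => (univ.image f).card = m)).card
      ≤ (univ.filter (fun f : Fin m → Fin N =>
            (univ.image f).card = m ∧ P (univ.image f))).card * N ^ m := by
  classical
  -- choose a reference set of size m
  obtain ⟨S₀, -, hS₀⟩ := Finset.exists_subset_card_eq (s := (univ : Finset (Fin N))) (n := m)
    (by rw [Finset.card_univ, Fintype.card_fin]; exact hmN)
  set γm := cfib m S₀ with hγm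
  -- rewrite the three function-counts as sums over sets
  have hA : (univ.filter (fun f : Fin m → Fin N => P (univ.image f))).card
      = ∑ S ∈ univ.filter P, cfib m S := strat P
  have hI : (univ.filter (fun f : Fin m → Fin N => (univ.image f).card = m)).card
      = N.choose m * γm := by
    rw [strat (fun S : Finset (Fin N) => S.card = m)]
    rw [Finset.sum_congr rfl (fun S hS => csym (N := N)
      (((Finset.mem_filter.mp hS).2).trans hS₀.symm))]
    rw [Finset.sum_const, tcard, smul_eq_mul]
  have hIG : (univ.filter (fun f : Fin m → Fin N =>
        (univ.image f).card = m ∧ P (univ.image f))).card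
      = gk P m * γm := by
    rw [strat (fun S : Finset (Fin N) => S.card = m ∧ P S)]
    rw [Finset.sum_congr rfl (fun S hS => csym (N := N)
      (((Finset.mem_filter.mp hS).2).1.trans hS₀.symm))]
    rw [Finset.sum_const, smul_eq_mul]; rfl
  have hN : N ^ m = ∑ S ∈ (univ : Finset (Finset (Fin N))), cfib m S := by
    have h1 : (univ.filter (fun _f : Fin m → Fin N => True)).card
        = ∑ S ∈ univ.filter (fun _S : Finset (Fin N) => True), cfib m S :=
      strat (fun _ => True)
    simpa [Finset.filter_true_of_mem, Finset.card_univ] using h1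
  -- per-cardinality key inequality
  have key : ∀ k : ℕ,
      (∑ S ∈ (univ.filter P).filter (fun S : Finset (Fin N) => S.card = k), cfib m S)
          * N.choose m
        ≤ gk P m * ∑ S ∈ univ.filter (fun S : Finset (Fin N) => S.card = k), cfib m S := by
    intro k
    rcases Nat.eq_zero_or_pos k with rfl | hk
    · have hz : ∀ S ∈ (univ.filter P).filter (fun S : Finset (Fin N) => S.card = 0),
          cfib m S = 0 := by
        intro S hS
        have : S = ∅ := Finset.card_eq_zero.mp (Finset.mem_filter.mp hS).2
        rw [this]; exact czero_empty hm
      rw [Finset.sum_eq_zero hz, Nat.zero_mul]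
      exact Nat.zero_le _
    rcases Nat.lt_or_ge m k with hmk | hkm
    · have hz : ∀ S ∈ (univ.filter P).filter (fun S : Finset (Fin N) => S.card = k),
          cfib m S = 0 := by
        intro S hS
        exact czero_big (by rw [(Finset.mem_filter.mp hS).2]; exact hmk)
      rw [Finset.sum_eq_zero hz, Nat.zero_mul]
      exact Nat.zero_le _
    · -- 1 ≤ k ≤ m ≤ N
      obtain ⟨T₀, -, hT₀⟩ := Finset.exists_subset_card_eq (s := (univ : Finset (Fin N))) (n := k)
        (by rw [Finset.card_univ, Fintype.card_fin]; exact hkm.trans hmN)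
      set γk := cfib m T₀ with hγk
      have e1 : (∑ S ∈ (univ.filter P).filter (fun S : Finset (Fin N) => S.card = k),
          cfib m S) = gk P k * γk := by
        rw [Finset.sum_congr rfl (fun S hS => csym (N := N)
          (((Finset.mem_filter.mp hS).2).trans hT₀.symm))]
        rw [Finset.sum_const, smul_eq_mul]
        congr 1
        rw [Finset.filter_filter]
        unfold gk
        congr 1
        ext S
        simp [and_comm]
      have e2 : (∑ S ∈ univ.filter (fun S : Finset (Fin N) => S.card = k), cfib m S)
          = N.choose k * γk := by
        rw [Finset.sum_congr rfl (fun S hS => csym (N := N)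
          (((Finset.mem_filter.mp hS).2).trans hT₀.symm))]
        rw [Finset.sum_const, tcard, smul_eq_mul]
      rw [e1, e2]
      have hr : gk P k * N.choose m ≤ gk P m * N.choose k :=
        ratio P Pmono k m hkm hmN
      calc gk P k * γk * N.choose m = gk P k * N.choose m * γk := by ring
        _ ≤ gk P m * N.choose k * γk := Nat.mul_le_mul_right _ hr
        _ = gk P m * (N.choose k * γk) := by ring
  -- sum the key inequality over k
  have hfib1 : (∑ S ∈ univ.filter P, cfib m S)
      = ∑ k ∈ Finset.range (N + 1),
          ∑ S ∈ (univ.filter P).filter (fun S : Finset (Fin N) => S.card = k), cfib m S := by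
    rw [Finset.sum_fiberwise_of_maps_to (fun S _ => Finset.mem_range.mpr
      (Nat.lt_succ_of_le (by
        simpa [Fintype.card_fin] using Finset.card_le_univ S)))]
  have hfib2 : (∑ S ∈ (univ : Finset (Finset (Fin N))), cfib m S)
      = ∑ k ∈ Finset.range (N + 1),
          ∑ S ∈ univ.filter (fun S : Finset (Fin N) => S.card = k), cfib m S := by
    rw [Finset.sum_fiberwise_of_maps_to (fun S _ => Finset.mem_range.mpr
      (Nat.lt_succ_of_le (by
        simpa [Fintype.card_fin] using Finset.card_le_univ S)))]
  have hmain : (∑ S ∈ univ.filter P, cfib m S) * N.choose m ≤ gk P m * N ^ m := by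
    rw [hN, hfib1, hfib2, Finset.sum_mul, Finset.mul_sum]
    exact Finset.sum_le_sum fun k _ => key k
  rw [hA, hI, hIG]
  calc (∑ S ∈ univ.filter P, cfib m S) * (N.choose m * γm)
      = (∑ S ∈ univ.filter P, cfib m S) * N.choose m * γm := by ring
    _ ≤ gk P m * N ^ m * γm := Nat.mul_le_mul_right _ hmain
    _ = gk P m * γm * N ^ m := by ring

end SamplingComb

end CombAux

section MatAux

def goodSet {n : ℕ} (w : Fin (n ^ 2) → Matrix (Fin n) (Fin n) ℂ)
    (ρ : Matrix (Fin n) (Fin n) ℂ) (S : Finset (Fin (n ^ 2))) : Prop :=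
  ∀ σ : Matrix (Fin n) (Fin n) ℂ, σ.IsHermitian →
    (∀ a ∈ S, Matrix.trace (w a * σ) = Matrix.trace (w a * ρ)) → σ ≠ ρ →
      traceNorm ρ < traceNorm σ

lemma goodSet_mono {n : ℕ} (w : Fin (n ^ 2) → Matrix (Fin n) (Fin n) ℂ)
    (ρ : Matrix (Fin n) (Fin n) ℂ) :
    ∀ ⦃S T : Finset (Fin (n ^ 2))⦄, S ⊆ T → goodSet w ρ S → goodSet w ρ T :=
  fun _S _T h hS σ hσ ht => hS σ hσ (fun a ha => ht a (h ha))

lemma samplingOp_eq_iff {n m : ℕ} (hm : 0 < m) (hn2 : 0 < n ^ 2)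
    (w : Fin (n ^ 2) → Matrix (Fin n) (Fin n) ℂ)
    (horth : ∀ a b, Matrix.trace (w a * w b) = if a = b then 1 else 0)
    (f : Fin m → Fin (n ^ 2)) (σ ρ : Matrix (Fin n) (Fin n) ℂ) :
    samplingOp w f σ = samplingOp w f ρ ↔
      ∀ a ∈ Finset.univ.image f, Matrix.trace (w a * σ) = Matrix.trace (w a * ρ) := by
  constructor
  · intro h a ha
    have hc : ((n ^ 2 : ℂ) / m) ≠ 0 := by
      apply div_ne_zero
      · have hn : n ≠ 0 := by rintro rfl; simp at hn2
        exact pow_ne_zero 2 (Nat.cast_ne_zero.mpr hn)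
      · exact_mod_cast Nat.cast_ne_zero.mpr hm.ne'
    have hsum : ∑ i, Matrix.trace (w (f i) * σ) • w (f i)
        = ∑ i, Matrix.trace (w (f i) * ρ) • w (f i) :=
      smul_right_injective _ hc h
    have hzero : ∑ i, (Matrix.trace (w (f i) * σ) - Matrix.trace (w (f i) * ρ)) • w (f i)
        = (0 : Matrix (Fin n) (Fin n) ℂ) := by
      simp only [sub_smul, Finset.sum_sub_distrib, hsum, sub_self]
    obtain ⟨i₀, -, rfl⟩ := Finset.mem_image.mp ha
    have h2 := congrArg (fun M => Matrix.trace (M * w (f i₀))) hzero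
    simp only [Finset.sum_mul, smul_mul_assoc, Matrix.trace_sum, Matrix.trace_smul,
      Matrix.zero_mul, Matrix.trace_zero, horth, smul_eq_mul, mul_ite, mul_one, mul_zero] at h2
    rw [Finset.sum_ite, Finset.sum_const_zero, add_zero] at h2
    have hmem : i₀ ∈ Finset.univ.filter (fun i => f i = f i₀) := by
      simp
    have hconst : ∀ i ∈ Finset.univ.filter (fun i => f i = f i₀),
        Matrix.trace (w (f i) * σ) - Matrix.trace (w (f i) * ρ)
          = Matrix.trace (w (f i₀) * σ) - Matrix.trace (w (f i₀) * ρ) := by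
      intro i hi
      rw [(Finset.mem_filter.mp hi).2]
    rw [Finset.sum_congr rfl hconst, Finset.sum_const, nsmul_eq_mul] at h2
    have hcard : ((Finset.univ.filter (fun i => f i = f i₀)).card : ℂ) ≠ 0 := by
      exact_mod_cast (Finset.card_pos.mpr ⟨i₀, hmem⟩).ne'
    have := mul_eq_zero.mp h2
    rcases this with h' | h'
    · exact absurd h' hcard
    · exact sub_eq_zero.mp h'
  · intro h
    unfold samplingOp
    congr 1
    refine Finset.sum_congr rfl fun i _ => ?_
    rw [h (f i) (Finset.mem_image_of_mem f (Finset.mem_univ i))]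

lemma uniqueSol_iff_goodSet {n m : ℕ} (hm : 0 < m) (hn2 : 0 < n ^ 2)
    (w : Fin (n ^ 2) → Matrix (Fin n) (Fin n) ℂ)
    (horth : ∀ a b, Matrix.trace (w a * w b) = if a = b then 1 else 0)
    (ρ : Matrix (Fin n) (Fin n) ℂ) (f : Fin m → Fin (n ^ 2)) :
    uniqueSol w ρ f ↔ goodSet w ρ (Finset.univ.image f) := by
  constructor
  · intro h σ hσ htr hne
    exact h σ hσ ((samplingOp_eq_iff hm hn2 w horth f σ ρ).mpr htr) hne
  · intro h σ hσ heq hne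
    exact h σ hσ ((samplingOp_eq_iff hm hn2 w horth f σ ρ).mp heq) hne

end MatAux

/-- **Sampling with replacement cannot outperform sampling without replacement**:
the success probability of trace-norm recovery under `m` uniform i.i.d. samples is at
most that under `m` uniform samples without replacement. -/
theorem sampling_with_replacement_le {n m : ℕ} (hm : 0 < m) (hmn : m ≤ n ^ 2)
    (w : Fin (n ^ 2) → Matrix (Fin n) (Fin n) ℂ)
    (hherm : ∀ a, (w a).IsHermitian)
    (horth : ∀ a b, Matrix.trace (w a * w b) = if a = b then 1 else 0)
    (hspan : ∀ σ : Matrix (Fin n) (Fin n) ℂ, σ.IsHermitian →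
      σ = ∑ a, ((Matrix.trace (w a * σ)).re : ℝ) • w a)
    (ρ : Matrix (Fin n) (Fin n) ℂ) (hρ : ρ.IsHermitian) :
    (Nat.card {f : Fin m → Fin (n ^ 2) // uniqueSol w ρ f} : ℝ) /
        (Nat.card (Fin m → Fin (n ^ 2)) : ℝ) ≤
      (Nat.card {f : Fin m → Fin (n ^ 2) // Function.Injective f ∧ uniqueSol w ρ f} : ℝ) /
        (Nat.card {f : Fin m → Fin (n ^ 2) // Function.Injective f} : ℝ) := by
  classical
  have hn2 : 0 < n ^ 2 := lt_of_lt_of_le hm hmn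
  have hinj : ∀ f : Fin m → Fin (n ^ 2),
      Function.Injective f ↔ (Finset.univ.image f).card = m := by
    intro f
    constructor
    · intro h
      rw [Finset.card_image_of_injective _ h, Finset.card_univ, Fintype.card_fin]
    · intro h
      have hcc : (Finset.univ.image f).card = (Finset.univ : Finset (Fin m)).card := by
        rw [h, Finset.card_univ, Fintype.card_fin]
      have h2 := Finset.card_image_iff.mp hcc
      rw [Finset.coe_univ] at h2
      exact fun a b hab => h2 (Set.mem_univ a) (Set.mem_univ b) hab
  have hchar : ∀ f : Fin m → Fin (n ^ 2),
      uniqueSol w ρ f ↔ goodSet w ρ (Finset.univ.image f) :=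
    fun f => uniqueSol_iff_goodSet hm hn2 w horth ρ f
  have h1 : Nat.card {f : Fin m → Fin (n ^ 2) // uniqueSol w ρ f}
      = (Finset.univ.filter
          (fun f : Fin m → Fin (n ^ 2) => goodSet w ρ (Finset.univ.image f))).card := by
    rw [Nat.card_eq_fintype_card, Fintype.card_subtype]
    congr 1
    ext f
    simp [hchar f]
  have h2 : Nat.card (Fin m → Fin (n ^ 2)) = (n ^ 2) ^ m := by
    rw [Nat.card_fun]
    simp
  have h3 : Nat.card {f : Fin m → Fin (n ^ 2) // Function.Injective f ∧ uniqueSol w ρ f}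
      = (Finset.univ.filter (fun f : Fin m → Fin (n ^ 2) =>
          (Finset.univ.image f).card = m ∧ goodSet w ρ (Finset.univ.image f))).card := by
    rw [Nat.card_eq_fintype_card, Fintype.card_subtype]
    congr 1
    ext f
    simp [hchar f, hinj f]
  have h4 : Nat.card {f : Fin m → Fin (n ^ 2) // Function.Injective f}
      = (Finset.univ.filter
          (fun f : Fin m → Fin (n ^ 2) => (Finset.univ.image f).card = m)).card := by
    rw [Nat.card_eq_fintype_card, Fintype.card_subtype]
    congr 1
    ext f
    simp [hinj f]
  rw [h1, h2, h3, h4]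
  have hDpos : 0 < (Finset.univ.filter
      (fun f : Fin m → Fin (n ^ 2) => (Finset.univ.image f).card = m)).card := by
    apply Finset.card_pos.mpr
    refine ⟨Fin.castLE hmn, ?_⟩
    rw [Finset.mem_filter]
    exact ⟨Finset.mem_univ _, (hinj _).mp (Fin.castLE_injective hmn)⟩
  rw [div_le_div_iff₀ (by positivity) (by exact_mod_cast hDpos)]
  exact_mod_cast SamplingComb.main_count hm hmn (goodSet w ρ) (goodSet_mono w ρ)
end
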